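/- arXiv:1609.00476 — 8 statements merged into one kernel-verified Lean document; each statement's English description precedes it below -/
import Mathlib

section
/- Let G be a finite group. Then csd(G) = 1 if and only if sd(G) = 1; equivalently, every two cyclic subgroups of G permute (HK = KH for all cyclic H, K ≤ G) if and only if every two subgroups of G permute (HK = KH for all H, K ≤ G). -/
open Pointwise

/-- The cyclic subgroup commutativity degree of a group `G`. -/
noncomputable def csd (G : Type*) [Group G] : ℚ :=
  (Nat.card {pr : Subgroup G × Subgroup G //
      IsCyclic ↥pr.1 ∧ IsCyclic ↥pr.2 ∧
      (pr.1 : Set G) * (pr.2 : Set G) = (pr.2 : Set G) * (pr.1 : Set G)} : ℚ) /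
  (Nat.card {H : Subgroup G // IsCyclic ↥H} : ℚ) ^ 2

/-- The subgroup commutativity degree of a group `G`. -/
noncomputable def sd (G : Type*) [Group G] : ℚ :=
  (Nat.card {pr : Subgroup G × Subgroup G //
      (pr.1 : Set G) * (pr.2 : Set G) = (pr.2 : Set G) * (pr.1 : Set G)} : ℚ) /
  (Nat.card (Subgroup G) : ℚ) ^ 2

lemma card_subtype_eq_iff {α : Type*} [Finite α] (p : α → Prop) :
    Nat.card {x // p x} = Nat.card α ↔ ∀ x, p x := by
  constructor
  · intro h x
    have h1 : Nat.card {x // p x} = {x | p x}.ncard := (Nat.card_coe_set_eq _)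
    have h2 : Nat.card α = (Set.univ : Set α).ncard := by
      simp [Set.ncard_univ]
    have : (Set.univ : Set α) = {x | p x} := by
      refine (Set.eq_of_subset_of_ncard_le (Set.subset_univ _) ?_ (Set.toFinite _)).symm
      rw [← h1, ← h2, h]
    exact (this.symm ▸ Set.mem_univ x : x ∈ {x | p x})
  · intro h
    exact Nat.card_congr (Equiv.subtypeUnivEquiv h)

lemma isCyclic_zpowers' {G : Type*} [Group G] (g : G) : IsCyclic ↥(Subgroup.zpowers g) := by
  refine ⟨⟨g, Subgroup.mem_zpowers g⟩, fun x => ?_⟩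
  obtain ⟨n, hn⟩ := Subgroup.mem_zpowers_iff.mp x.2
  exact Subgroup.mem_zpowers_iff.mpr ⟨n, Subtype.ext (by simpa using hn)⟩

lemma cyclic_perm_imp {G : Type*} [Group G]
    (h : ∀ H K : Subgroup G, IsCyclic ↥H → IsCyclic ↥K →
      (H : Set G) * (K : Set G) = (K : Set G) * (H : Set G)) :
    ∀ H K : Subgroup G, (H : Set G) * (K : Set G) = (K : Set G) * (H : Set G) := by
  have key : ∀ H K : Subgroup G, (K : Set G) * (H : Set G) ⊆ (H : Set G) * (K : Set G) := by
    intro H K x hx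
    rw [Set.mem_mul] at hx
    obtain ⟨k, hk, h', hh, rfl⟩ := hx
    have hc := h (Subgroup.zpowers h') (Subgroup.zpowers k) (isCyclic_zpowers' h') (isCyclic_zpowers' k)
    have hmem : k * h' ∈ (Subgroup.zpowers h' : Set G) * (Subgroup.zpowers k : Set G) := by
      rw [hc]
      exact Set.mul_mem_mul (Subgroup.mem_zpowers k) (Subgroup.mem_zpowers h')
    rw [Set.mem_mul] at hmem
    obtain ⟨a, ha, b, hb, hab⟩ := hmem
    rw [← hab]
    exact Set.mul_mem_mul ((Subgroup.zpowers_le.mpr hh) ha) ((Subgroup.zpowers_le.mpr hk) hb)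
  intro H K
  exact le_antisymm (key K H) (key H K)

theorem stmt_0 (G : Type*) [Group G] [Fintype G] :
    (csd G = 1 ↔ sd G = 1) ∧
    ((∀ H K : Subgroup G, IsCyclic ↥H → IsCyclic ↥K →
        (H : Set G) * (K : Set G) = (K : Set G) * (H : Set G)) ↔
      (∀ H K : Subgroup G, (H : Set G) * (K : Set G) = (K : Set G) * (H : Set G))) := by
  classical
  have hiff2 : (∀ H K : Subgroup G, IsCyclic ↥H → IsCyclic ↥K →
        (H : Set G) * (K : Set G) = (K : Set G) * (H : Set G)) ↔
      (∀ H K : Subgroup G, (H : Set G) * (K : Set G) = (K : Set G) * (H : Set G)) :=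
    ⟨cyclic_perm_imp, fun h H K _ _ => h H K⟩
  refine ⟨?_, hiff2⟩
  -- csd = 1 iff cyclic condition
  have hfin : Finite (Subgroup G) := inferInstance
  have hcsd : csd G = 1 ↔ (∀ H K : Subgroup G, IsCyclic ↥H → IsCyclic ↥K →
      (H : Set G) * (K : Set G) = (K : Set G) * (H : Set G)) := by
    have hden : (Nat.card {H : Subgroup G // IsCyclic ↥H} : ℚ) ≠ 0 := by
      have : Nat.card {H : Subgroup G // IsCyclic ↥H} ≠ 0 := by
        have : Nonempty {H : Subgroup G // IsCyclic ↥H} := ⟨⟨⊥, inferInstance⟩⟩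
        exact Nat.card_ne_zero.mpr ⟨this, inferInstance⟩
      exact_mod_cast this
    rw [csd, div_eq_one_iff_eq (by positivity)]
    rw [show ((Nat.card {H : Subgroup G // IsCyclic ↥H} : ℚ)) ^ 2 =
        ((Nat.card {H : Subgroup G // IsCyclic ↥H} ^ 2 : ℕ) : ℚ) by push_cast; ring]
    rw [Nat.cast_inj]
    have hB : Nat.card {pr : Subgroup G × Subgroup G // IsCyclic ↥pr.1 ∧ IsCyclic ↥pr.2}
        = Nat.card {H : Subgroup G // IsCyclic ↥H} ^ 2 := by
      have e : {pr : Subgroup G × Subgroup G // IsCyclic ↥pr.1 ∧ IsCyclic ↥pr.2} ≃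
          {H : Subgroup G // IsCyclic ↥H} × {H : Subgroup G // IsCyclic ↥H} :=
        ⟨fun x => (⟨x.1.1, x.2.1⟩, ⟨x.1.2, x.2.2⟩), fun x => ⟨(x.1.1, x.2.1), x.1.2, x.2.2⟩,
          fun x => rfl, fun x => rfl⟩
      rw [Nat.card_congr e, Nat.card_prod]; ring
    rw [← hB]
    have hE : {pr : Subgroup G × Subgroup G // IsCyclic ↥pr.1 ∧ IsCyclic ↥pr.2 ∧
        (pr.1 : Set G) * (pr.2 : Set G) = (pr.2 : Set G) * (pr.1 : Set G)} ≃
        {x : {pr : Subgroup G × Subgroup G // IsCyclic ↥pr.1 ∧ IsCyclic ↥pr.2} //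
          ((x : Subgroup G × Subgroup G).1 : Set G) * ((x : Subgroup G × Subgroup G).2 : Set G)
            = ((x : Subgroup G × Subgroup G).2 : Set G) * ((x : Subgroup G × Subgroup G).1 : Set G)} := by
      refine ⟨fun x => ⟨⟨x.1, x.2.1, x.2.2.1⟩, x.2.2.2⟩, fun x => ⟨x.1.1, x.1.2.1, x.1.2.2, x.2⟩,
        fun x => rfl, fun x => rfl⟩
    rw [Nat.card_congr hE, card_subtype_eq_iff]
    constructor
    · intro h H K hH hK
      exact h ⟨(H, K), hH, hK⟩
    · intro h x
      exact h x.1.1 x.1.2 x.2.1 x.2.2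
  have hsd : sd G = 1 ↔ (∀ H K : Subgroup G,
      (H : Set G) * (K : Set G) = (K : Set G) * (H : Set G)) := by
    have hden : (Nat.card (Subgroup G) : ℚ) ≠ 0 := by
      have : Nat.card (Subgroup G) ≠ 0 :=
        Nat.card_ne_zero.mpr ⟨⟨⊥⟩, inferInstance⟩
      exact_mod_cast this
    rw [sd, div_eq_one_iff_eq (by positivity)]
    rw [show ((Nat.card (Subgroup G) : ℚ)) ^ 2 = ((Nat.card (Subgroup G) ^ 2 : ℕ) : ℚ) by
      push_cast; ring]
    rw [Nat.cast_inj]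
    rw [show Nat.card (Subgroup G) ^ 2 = Nat.card (Subgroup G × Subgroup G) by
      rw [Nat.card_prod]; ring]
    rw [card_subtype_eq_iff]
    exact ⟨fun h H K => h (H, K), fun h pr => h pr.1 pr.2⟩
  rw [hcsd, hsd]
  exact hiff2
end

section
/- Let G be a finite group and M a subgroup of G. Then csd(G) ≥ (|L₁(M)| / |L₁(G)|)² · csd(M). In particular, if M is abelian then csd(G) ≥ (|L₁(M)| / |L₁(G)|)². -/
open Pointwise

theorem stmt_3 (G : Type*) [Group G] [Fintype G] (M : Subgroup G) :
    csd G ≥ ((Nat.card {H : Subgroup ↥M // IsCyclic ↥H} : ℚ) /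
        (Nat.card {H : Subgroup G // IsCyclic ↥H} : ℚ)) ^ 2 * csd ↥M ∧
    ((∀ a b : ↥M, a * b = b * a) →
      csd G ≥ ((Nat.card {H : Subgroup ↥M // IsCyclic ↥H} : ℚ) /
        (Nat.card {H : Subgroup G // IsCyclic ↥H} : ℚ)) ^ 2) := by
  classical
  -- abbreviations
  set PG := Nat.card {pr : Subgroup G × Subgroup G //
      IsCyclic ↥pr.1 ∧ IsCyclic ↥pr.2 ∧
      (pr.1 : Set G) * (pr.2 : Set G) = (pr.2 : Set G) * (pr.1 : Set G)} with hPG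
  set PM := Nat.card {pr : Subgroup ↥M × Subgroup ↥M //
      IsCyclic ↥pr.1 ∧ IsCyclic ↥pr.2 ∧
      (pr.1 : Set ↥M) * (pr.2 : Set ↥M) = (pr.2 : Set ↥M) * (pr.1 : Set ↥M)} with hPM
  set cG := Nat.card {H : Subgroup G // IsCyclic ↥H} with hcG
  set cM := Nat.card {H : Subgroup ↥M // IsCyclic ↥H} with hcM
  have hcyc : ∀ (H : Subgroup ↥M), IsCyclic ↥H → IsCyclic ↥(H.map M.subtype) := by
    intro H hH
    exact isCyclic_of_surjective (H.equivMapOfInjective M.subtype M.subtype_injective)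
      (H.equivMapOfInjective M.subtype M.subtype_injective).surjective
  have hset : ∀ (H K : Subgroup ↥M),
      (H : Set ↥M) * (K : Set ↥M) = (K : Set ↥M) * (H : Set ↥M) →
      ((H.map M.subtype : Subgroup G) : Set G) * ((K.map M.subtype : Subgroup G) : Set G)
        = ((K.map M.subtype : Subgroup G) : Set G) * ((H.map M.subtype : Subgroup G) : Set G) := by
    intro H K h
    rw [Subgroup.coe_map, Subgroup.coe_map, ← Set.image_mul, ← Set.image_mul, h]
  -- injection from pairs over M to pairs over G
  have hle : PM ≤ PG := by
    rw [hPM, hPG]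
    apply Nat.card_le_card_of_injective
      (fun p => ⟨(p.1.1.map M.subtype, p.1.2.map M.subtype),
        hcyc _ p.2.1, hcyc _ p.2.2.1, hset _ _ p.2.2.2⟩)
    rintro ⟨⟨H1, K1⟩, _⟩ ⟨⟨H2, K2⟩, _⟩ h
    simp only [Subtype.mk.injEq, Prod.mk.injEq] at h
    have e1 := Subgroup.map_injective (f := M.subtype) M.subtype_injective h.1
    have e2 := Subgroup.map_injective (f := M.subtype) M.subtype_injective h.2
    simp [e1, e2]
  have hcMpos : 0 < cM := by
    rw [hcM]
    have : Nonempty {H : Subgroup ↥M // IsCyclic ↥H} := ⟨⟨⊥, isCyclic_of_subsingleton⟩⟩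
    exact Nat.card_pos
  have hcGpos : 0 < cG := by
    rw [hcG]
    have : Nonempty {H : Subgroup G // IsCyclic ↥H} := ⟨⟨⊥, isCyclic_of_subsingleton⟩⟩
    exact Nat.card_pos
  have hcMQ : (cM : ℚ) ≠ 0 := by positivity
  have hcGQ : (cG : ℚ) ≠ 0 := by positivity
  have key : csd G ≥ ((cM : ℚ) / cG) ^ 2 * csd ↥M := by
    unfold csd
    rw [← hPG, ← hPM, ← hcG, ← hcM]
    have : ((cM : ℚ) / cG) ^ 2 * ((PM : ℚ) / (cM : ℚ) ^ 2) = (PM : ℚ) / (cG : ℚ) ^ 2 := by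
      field_simp
    rw [this]
    have hPQ : (PM : ℚ) ≤ (PG : ℚ) := by exact_mod_cast hle
    gcongr
  refine ⟨key, fun hab => ?_⟩
  -- in the abelian case, csd M = 1
  have hsmul : ∀ s t : Set ↥M, s * t = t * s := by
    intro s t
    ext x
    simp only [Set.mem_mul]
    constructor
    · rintro ⟨a, ha, b, hb, rfl⟩; exact ⟨b, hb, a, ha, (hab a b).symm⟩
    · rintro ⟨a, ha, b, hb, rfl⟩; exact ⟨b, hb, a, ha, (hab a b).symm⟩
  have hPMeq : PM = cM * cM := by
    rw [hPM, hcM, ← Nat.card_prod]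
    apply Nat.card_congr
    exact ⟨fun p => (⟨p.1.1, p.2.1⟩, ⟨p.1.2, p.2.2.1⟩),
      fun q => ⟨(q.1.1, q.2.1), q.1.2, q.2.2, hsmul _ _⟩,
      fun p => rfl, fun q => rfl⟩
  have hcsdM : csd ↥M = 1 := by
    unfold csd
    rw [← hPM, ← hcM, hPMeq]
    push_cast
    field_simp
  calc csd G ≥ ((cM : ℚ) / cG) ^ 2 * csd ↥M := key
    _ = ((cM : ℚ) / cG) ^ 2 := by rw [hcsdM, mul_one]
end

section
/- Let G₁, ..., G_k be finite groups whose orders are pairwise coprime. Then csd(G₁ × ⋯ × G_k) = csd(G₁) · csd(G₂) ⋯ csd(G_k). -/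
open Pointwise

section Aux

variable {k : ℕ} {G : Fin k → Type*} [∀ i, Group (G i)] [∀ i, Fintype (G i)]

/-- Key lemma: in a subgroup of a product of groups of pairwise coprime orders,
each "component" of an element belongs to the subgroup. -/
lemma csd_single_mem
    (hcop : ∀ i j, i ≠ j → Nat.Coprime (Nat.card (G i)) (Nat.card (G j)))
    (H : Subgroup (∀ i, G i)) {g : ∀ i, G i} (hg : g ∈ H) (i : Fin k) :
    Pi.mulSingle i (g i) ∈ H := by
  set n := orderOf (g i) with hn
  set N := ∏ j ∈ Finset.univ.erase i, orderOf (g j) with hN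
  have hco : Nat.Coprime N n := by
    apply Nat.Coprime.prod_left
    intro j hj
    have hji : j ≠ i := Finset.ne_of_mem_erase hj
    exact ((hcop j i hji).coprime_dvd_left (orderOf_dvd_natCard _)).coprime_dvd_right
      (orderOf_dvd_natCard _)
  have hnpos : 0 < n := orderOf_pos _
  set t := N ^ n.totient with ht
  have hmod : t ≡ 1 [MOD n] := Nat.ModEq.pow_totient hco
  have hkey : g ^ t = Pi.mulSingle i (g i) := by
    funext j
    rcases eq_or_ne j i with rfl | hji
    · have h1 : (g j) ^ (t % n) = (g j) ^ t := pow_mod_orderOf (g j) t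
      have h2 : (g j) ^ (1 % n) = (g j) ^ (1 : ℕ) := pow_mod_orderOf (g j) 1
      have heq : t % n = 1 % n := hmod
      simp only [Pi.pow_apply, Pi.mulSingle_eq_same]
      rw [← h1, heq, h2, pow_one]
    · have hdvd : orderOf (g j) ∣ t := by
        apply dvd_pow (Finset.dvd_prod_of_mem _ (Finset.mem_erase.mpr ⟨hji, Finset.mem_univ j⟩))
        simpa using hnpos.ne'
      have : (g j) ^ t = 1 := orderOf_dvd_iff_pow_eq_one.mp hdvd
      simp [Pi.pow_apply, Pi.mulSingle_eq_of_ne hji, this]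
  exact hkey ▸ H.pow_mem hg t

lemma csd_pi_map_eq
    (hcop : ∀ i j, i ≠ j → Nat.Coprime (Nat.card (G i)) (Nat.card (G j)))
    (H : Subgroup (∀ i, G i)) :
    Subgroup.pi Set.univ (fun i => H.map (Pi.evalMonoidHom G i)) = H := by
  ext x
  constructor
  · intro hx
    have h1 : ∀ i, ∃ g ∈ H, g i = x i := by
      intro i
      have := hx i trivial
      simpa [Subgroup.mem_map] using this
    rw [← Finset.noncommProd_mulSingle x]
    apply Subgroup.noncommProd_mem
    intro i _
    obtain ⟨g, hg, hgi⟩ := h1 i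
    rw [← hgi]
    exact csd_single_mem hcop H hg i
  · intro hx i _
    exact ⟨x, hx, rfl⟩

lemma csd_map_pi_eq (A : ∀ i, Subgroup (G i)) (i : Fin k) :
    (Subgroup.pi Set.univ A).map (Pi.evalMonoidHom G i) = A i := by
  ext x
  rw [Subgroup.mem_map]
  constructor
  · rintro ⟨g, hg, rfl⟩
    exact hg i trivial
  · intro hx
    refine ⟨Pi.mulSingle i x, ?_, Pi.mulSingle_eq_same i x⟩
    exact (Subgroup.mulSingle_mem_pi i x).mpr fun _ => hx

/-- Components-to-tuple multiplicative equivalence for a pi subgroup. -/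
def csdPiSubEquiv (A : ∀ i, Subgroup (G i)) :
    ↥(Subgroup.pi Set.univ A) ≃* ∀ i, ↥(A i) where
  toFun g := fun i => ⟨g.1 i, g.2 i trivial⟩
  invFun f := ⟨fun i => (f i).1, fun i _ => (f i).2⟩
  left_inv g := rfl
  right_inv f := rfl
  map_mul' a b := rfl

lemma csd_nat_prod_dvd {ι : Type*} [Fintype ι] {f : ι → ℕ} {n : ℕ}
    (hco : ∀ i j, i ≠ j → Nat.Coprime (f i) (f j)) (h : ∀ i, f i ∣ n) :
    (∏ i, f i) ∣ n := by
  classical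
  have : ∀ s : Finset ι, (∏ i ∈ s, f i) ∣ n := by
    intro s
    induction s using Finset.induction_on with
    | empty => simp
    | @insert a s' hx ih =>
      rw [Finset.prod_insert hx]
      refine Nat.Coprime.mul_dvd_of_dvd_of_dvd ?_ (h a) ih
      exact Nat.Coprime.prod_right fun j hj => hco a j (fun hh => hx (hh ▸ hj))
  exact this Finset.univ

lemma csd_isCyclic_pi_iff
    (hcop : ∀ i j, i ≠ j → Nat.Coprime (Nat.card (G i)) (Nat.card (G j)))
    (A : ∀ i, Subgroup (G i)) :
    IsCyclic ↥(Subgroup.pi Set.univ A) ↔ ∀ i, IsCyclic ↥(A i) := by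
  constructor
  · intro h i
    let φ : ↥(Subgroup.pi Set.univ A) →* ↥(A i) :=
      { toFun := fun g => ⟨g.1 i, g.2 i trivial⟩
        map_one' := rfl
        map_mul' := fun a b => rfl }
    apply isCyclic_of_surjective φ
    rintro ⟨x, hx⟩
    refine ⟨⟨Pi.mulSingle i x, (Subgroup.mulSingle_mem_pi i x).mpr fun _ => hx⟩, ?_⟩
    exact Subtype.ext (Pi.mulSingle_eq_same i x)
  · intro h
    have hgen := fun i => (h i).exists_generator
    choose gg hgg using hgen
    let g : ↥(Subgroup.pi Set.univ A) := ⟨fun i => (gg i).1, fun i _ => (gg i).2⟩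
    have hcard : Nat.card ↥(Subgroup.pi Set.univ A) = ∏ i, Nat.card ↥(A i) := by
      rw [Nat.card_congr (csdPiSubEquiv A).toEquiv, Nat.card_pi]
    have hordgi : ∀ i, orderOf (gg i) = Nat.card ↥(A i) := fun i =>
      orderOf_eq_card_of_forall_mem_zpowers (hgg i)
    have hdvd1 : orderOf g ∣ Nat.card ↥(Subgroup.pi Set.univ A) := orderOf_dvd_natCard g
    have hdvd2 : (∏ i, Nat.card ↥(A i)) ∣ orderOf g := by
      have hco : ∀ i j, i ≠ j → Nat.Coprime (Nat.card ↥(A i)) (Nat.card ↥(A j)) := by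
        intro i j hij
        exact ((hcop i j hij).coprime_dvd_left (Subgroup.card_subgroup_dvd_card _)).coprime_dvd_right
          (Subgroup.card_subgroup_dvd_card _)
      apply csd_nat_prod_dvd hco
      intro i
      rw [← hordgi i]
      apply orderOf_dvd_of_pow_eq_one
      have hpow : g ^ orderOf g = 1 := pow_orderOf_eq_one g
      have : (g : ∀ i, G i) ^ orderOf g = 1 := by
        rw [← SubgroupClass.coe_pow, hpow]; rfl
      have hi : ((g : ∀ i, G i) ^ orderOf g) i = 1 := by rw [this]; rfl
      ext
      simpa using hi
    have hord : orderOf g = Nat.card ↥(Subgroup.pi Set.univ A) :=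
      Nat.dvd_antisymm hdvd1 (hcard ▸ hdvd2)
    exact isCyclic_of_orderOf_eq_card g hord

lemma csd_set_pi_mul (S T : ∀ i, Set (G i)) :
    (Set.pi Set.univ S) * (Set.pi Set.univ T) = Set.pi Set.univ (fun i => S i * T i) := by
  ext x
  constructor
  · rintro ⟨a, ha, b, hb, rfl⟩ i _
    exact ⟨a i, ha i trivial, b i, hb i trivial, rfl⟩
  · intro hx
    have h := fun i => hx i trivial
    choose a ha b hb hab using h
    exact ⟨a, fun i _ => ha i, b, fun i _ => hb i, funext fun i => hab i⟩

lemma csd_pi_eq_iff {S T : ∀ i, Set (G i)} (hS : ∀ i, (S i).Nonempty)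
    (hT : ∀ i, (T i).Nonempty) :
    Set.pi Set.univ S = Set.pi Set.univ T ↔ ∀ i, S i = T i := by
  constructor
  · intro h i
    have hne : (Set.pi Set.univ S).Nonempty := Set.univ_pi_nonempty_iff.mpr hS
    have hne' : (Set.pi Set.univ T).Nonempty := Set.univ_pi_nonempty_iff.mpr hT
    calc S i = Function.eval i '' Set.pi Set.univ S := (Set.eval_image_univ_pi hne).symm
      _ = Function.eval i '' Set.pi Set.univ T := by rw [h]
      _ = T i := Set.eval_image_univ_pi hne'
  · intro h
    simp only [funext h]

lemma csd_comm_iff (A B : ∀ i, Subgroup (G i)) :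
    ((Subgroup.pi Set.univ A : Set (∀ i, G i)) * (Subgroup.pi Set.univ B : Set (∀ i, G i)) =
      (Subgroup.pi Set.univ B : Set (∀ i, G i)) * (Subgroup.pi Set.univ A : Set (∀ i, G i))) ↔
    ∀ i, (A i : Set (G i)) * (B i : Set (G i)) = (B i : Set (G i)) * (A i : Set (G i)) := by
  rw [Subgroup.coe_pi, Subgroup.coe_pi, csd_set_pi_mul, csd_set_pi_mul]
  exact csd_pi_eq_iff
    (fun i => ⟨1, 1, (A i).one_mem, 1, (B i).one_mem, mul_one 1⟩)
    (fun i => ⟨1, 1, (B i).one_mem, 1, (A i).one_mem, mul_one 1⟩)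

end Aux

section Main

variable {k : ℕ} {G : Fin k → Type*} [∀ i, Group (G i)] [∀ i, Fintype (G i)]

/-- Equivalence between permuting pairs of cyclic subgroups of the product and
tuples of permuting pairs of cyclic subgroups of the factors. -/
noncomputable def csdPairEquiv
    (hcop : ∀ i j, i ≠ j → Nat.Coprime (Nat.card (G i)) (Nat.card (G j))) :
    {pr : Subgroup (∀ i, G i) × Subgroup (∀ i, G i) //
      IsCyclic ↥pr.1 ∧ IsCyclic ↥pr.2 ∧
      (pr.1 : Set (∀ i, G i)) * (pr.2 : Set (∀ i, G i)) =
        (pr.2 : Set (∀ i, G i)) * (pr.1 : Set (∀ i, G i))} ≃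
    ∀ i, {pr : Subgroup (G i) × Subgroup (G i) //
      IsCyclic ↥pr.1 ∧ IsCyclic ↥pr.2 ∧
      (pr.1 : Set (G i)) * (pr.2 : Set (G i)) =
        (pr.2 : Set (G i)) * (pr.1 : Set (G i))} where
  toFun p := fun i => ⟨(p.1.1.map (Pi.evalMonoidHom G i), p.1.2.map (Pi.evalMonoidHom G i)), by
    obtain ⟨⟨H, K⟩, h1, h2, h3⟩ := p
    simp only at h1 h2 h3 ⊢
    rw [← csd_pi_map_eq hcop H] at h1 h3
    rw [← csd_pi_map_eq hcop K] at h2 h3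
    exact ⟨(csd_isCyclic_pi_iff hcop _).mp h1 i, (csd_isCyclic_pi_iff hcop _).mp h2 i,
      (csd_comm_iff _ _).mp h3 i⟩⟩
  invFun f := ⟨(Subgroup.pi Set.univ (fun i => (f i).1.1),
      Subgroup.pi Set.univ (fun i => (f i).1.2)),
    (csd_isCyclic_pi_iff hcop _).mpr fun i => (f i).2.1,
    (csd_isCyclic_pi_iff hcop _).mpr fun i => (f i).2.2.1,
    (csd_comm_iff _ _).mpr fun i => (f i).2.2.2⟩
  left_inv p := Subtype.ext (Prod.ext (csd_pi_map_eq hcop _) (csd_pi_map_eq hcop _))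
  right_inv f := funext fun i => Subtype.ext (Prod.ext (csd_map_pi_eq _ i) (csd_map_pi_eq _ i))

/-- Equivalence between cyclic subgroups of the product and tuples of cyclic
subgroups of the factors. -/
noncomputable def csdCycEquiv
    (hcop : ∀ i j, i ≠ j → Nat.Coprime (Nat.card (G i)) (Nat.card (G j))) :
    {H : Subgroup (∀ i, G i) // IsCyclic ↥H} ≃ ∀ i, {H : Subgroup (G i) // IsCyclic ↥H} where
  toFun H := fun i => ⟨H.1.map (Pi.evalMonoidHom G i), by
    obtain ⟨H, h1⟩ := H
    simp only at h1 ⊢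
    rw [← csd_pi_map_eq hcop H] at h1
    exact (csd_isCyclic_pi_iff hcop _).mp h1 i⟩
  invFun f := ⟨Subgroup.pi Set.univ (fun i => (f i).1),
    (csd_isCyclic_pi_iff hcop _).mpr fun i => (f i).2⟩
  left_inv H := Subtype.ext (csd_pi_map_eq hcop _)
  right_inv f := funext fun i => Subtype.ext (csd_map_pi_eq _ i)

end Main

theorem stmt_4 (k : ℕ) (G : Fin k → Type*) [∀ i, Group (G i)] [∀ i, Fintype (G i)]
    (hcop : ∀ i j, i ≠ j → Nat.Coprime (Nat.card (G i)) (Nat.card (G j))) :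
    csd (∀ i, G i) = ∏ i, csd (G i) := by
  unfold csd
  rw [Nat.card_congr (csdPairEquiv hcop), Nat.card_congr (csdCycEquiv hcop),
    Nat.card_pi, Nat.card_pi]
  push_cast
  rw [Finset.prod_div_distrib]
  congr 1
  · rw [← Finset.prod_pow]
end

section
/- Let G be a finite nilpotent group and let P₁, ..., P_k be its Sylow subgroups (one for each prime dividing |G|). Then csd(G) = csd(P₁) · csd(P₂) ⋯ csd(P_k). -/
open Pointwise
open scoped Function

set_option linter.unusedSectionVars false
set_option linter.unnecessarySimpa false

section pi
variable {ι : Type*} [Fintype ι] [DecidableEq ι] {G : ι → Type*} [∀ i, Group (G i)]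
  [∀ i, Finite (G i)]

lemma mulSingle_mem (hcop : Pairwise (Nat.Coprime on fun i => Nat.card (G i)))
    (H : Subgroup (∀ i, G i)) {g : ∀ i, G i} (hg : g ∈ H) (i : ι) :
    Pi.mulSingle i (g i) ∈ H := by
  classical
  set n : ℕ := ∏ j ∈ Finset.univ.erase i, Nat.card (G j) with hn
  have hndvd : ∀ j, j ≠ i → Nat.card (G j) ∣ n := fun j hj =>
    Finset.dvd_prod_of_mem _ (Finset.mem_erase.mpr ⟨hj, Finset.mem_univ j⟩)
  have hcopn : Nat.Coprime n (orderOf (g i)) := by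
    have h1 : Nat.Coprime n (Nat.card (G i)) :=
      Nat.Coprime.prod_left fun j hj => hcop (Finset.ne_of_mem_erase hj)
    exact h1.coprime_dvd_right (orderOf_dvd_natCard _)
  have hz : Subgroup.zpowers ((g i) ^ n) = Subgroup.zpowers (g i) := by
    apply Subgroup.eq_of_le_of_card_ge
    · exact Subgroup.zpowers_le.mpr (Subgroup.pow_mem _ (Subgroup.mem_zpowers _) n)
    · rw [Nat.card_zpowers, Nat.card_zpowers, hcopn.symm.orderOf_pow]
  have hgi : g i ∈ Subgroup.zpowers ((g i) ^ n) := hz ▸ Subgroup.mem_zpowers _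
  obtain ⟨m, hm⟩ := hgi
  have hmem : (g ^ n) ^ m ∈ H := H.zpow_mem (H.pow_mem hg n) m
  have heq : Pi.mulSingle i (g i) = (g ^ n) ^ m := by
    funext j
    by_cases hji : j = i
    · subst hji
      simpa using hm.symm
    · have h1 : (g j) ^ n = 1 :=
        orderOf_dvd_iff_pow_eq_one.mp ((orderOf_dvd_natCard _).trans (hndvd j hji))
      simp [Pi.mulSingle_apply, hji, h1]
  rw [heq]; exact hmem

lemma subgroup_eq_pi (hcop : Pairwise (Nat.Coprime on fun i => Nat.card (G i)))
    (H : Subgroup (∀ i, G i)) :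
    H = Subgroup.pi Set.univ (fun i => H.map (Pi.evalMonoidHom G i)) := by
  apply le_antisymm
  · intro g hg
    exact fun i _ => ⟨g, hg, rfl⟩
  · intro f hf
    rw [← Finset.noncommProd_mulSingle f]
    apply Subgroup.noncommProd_mem
    intro i _
    obtain ⟨g, hg, hgi⟩ := hf i (Set.mem_univ i)
    rw [show f i = g i from hgi.symm]
    exact mulSingle_mem hcop H hg i

lemma map_pi_eq (A : ∀ i, Subgroup (G i)) (i : ι) :
    (Subgroup.pi Set.univ A).map (Pi.evalMonoidHom G i) = A i := by
  apply le_antisymm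
  · rintro _ ⟨g, hg, rfl⟩
    exact hg i (Set.mem_univ i)
  · intro x hx
    refine ⟨Pi.mulSingle i x, fun j _ => ?_, Pi.mulSingle_eq_same i x⟩
    by_cases hji : j = i
    · subst hji; simpa using hx
    · rw [Pi.mulSingle_eq_of_ne hji]
      exact (A j).one_mem

/-- The correspondence between subgroups of a product of groups of coprime orders
and families of subgroups. -/
noncomputable def subgroupPiEquiv (hcop : Pairwise (Nat.Coprime on fun i => Nat.card (G i))) :
    Subgroup (∀ i, G i) ≃ ∀ i, Subgroup (G i) where
  toFun H i := H.map (Pi.evalMonoidHom G i)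
  invFun A := Subgroup.pi Set.univ A
  left_inv H := (subgroup_eq_pi hcop H).symm
  right_inv A := funext fun i => map_pi_eq A i

/-- A subgroup `pi univ A` is isomorphic to the product of the `A i`. -/
def piSubgroupMulEquiv (A : ∀ i, Subgroup (G i)) :
    ↥(Subgroup.pi Set.univ A) ≃* ∀ i, ↥(A i) where
  toFun x i := ⟨x.1 i, x.2 i (Set.mem_univ i)⟩
  invFun f := ⟨fun i => f i, fun i _ => (f i).2⟩
  left_inv _ := rfl
  right_inv _ := rfl
  map_mul' _ _ := rfl

lemma nat_prod_dvd_of_coprime {ι : Type*} {s : Finset ι} {f : ι → ℕ} {n : ℕ}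
    (hc : ∀ i ∈ s, ∀ j ∈ s, i ≠ j → Nat.Coprime (f i) (f j)) (h : ∀ i ∈ s, f i ∣ n) :
    ∏ i ∈ s, f i ∣ n := by
  classical
  induction s using Finset.cons_induction with
  | empty => simpa using Nat.one_dvd n
  | cons a s ha ih =>
    rw [Finset.prod_cons]
    refine Nat.Coprime.mul_dvd_of_dvd_of_dvd ?_ (h a (Finset.mem_cons_self a s)) ?_
    · exact Nat.Coprime.prod_right fun j hj => hc a (Finset.mem_cons_self a s) j
        (Finset.mem_cons_of_mem hj) (fun e => ha (e ▸ hj))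
    · exact ih (fun i hi j hj hij => hc i (Finset.mem_cons_of_mem hi) j
        (Finset.mem_cons_of_mem hj) hij) (fun i hi => h i (Finset.mem_cons_of_mem hi))

lemma isCyclic_pi_type {K : ι → Type*} [∀ i, Group (K i)] [∀ i, Finite (K i)]
    (hcop : Pairwise (Nat.Coprime on fun i => Nat.card (K i))) (hcyc : ∀ i, IsCyclic (K i)) :
    IsCyclic (∀ i, K i) := by
  classical
  choose g hg using fun i => (hcyc i).exists_generator
  have hord : ∀ i, orderOf (g i) = Nat.card (K i) := fun i =>
    orderOf_eq_card_of_forall_mem_zpowers (hg i)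
  apply isCyclic_of_orderOf_eq_card (g : ∀ i, K i)
  have h1 : orderOf (g : ∀ i, K i) ∣ ∏ i, Nat.card (K i) := by
    apply orderOf_dvd_of_pow_eq_one
    funext i
    have hd : Nat.card (K i) ∣ ∏ i, Nat.card (K i) := Finset.dvd_prod_of_mem _ (Finset.mem_univ i)
    rw [Pi.pow_apply, Pi.one_apply]
    exact orderOf_dvd_iff_pow_eq_one.mp ((hord i ▸ hd : orderOf (g i) ∣ _))
  have h2 : ∏ i, Nat.card (K i) ∣ orderOf (g : ∀ i, K i) := by
    apply nat_prod_dvd_of_coprime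
    · exact fun i _ j _ hij => hcop hij
    · intro i _
      rw [← hord i]
      apply orderOf_dvd_of_pow_eq_one
      have := congrFun (pow_orderOf_eq_one (g : ∀ i, K i)) i
      rwa [Pi.pow_apply, Pi.one_apply] at this
  rw [Nat.card_pi]
  exact Nat.dvd_antisymm h1 h2

lemma coe_pi_mul (A B : ∀ i, Subgroup (G i)) :
    ((Subgroup.pi Set.univ A : Subgroup (∀ i, G i)) : Set (∀ i, G i)) *
      ((Subgroup.pi Set.univ B : Subgroup (∀ i, G i)) : Set (∀ i, G i)) =
    Set.pi Set.univ (fun i => (A i : Set (G i)) * (B i : Set (G i))) := by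
  ext f
  constructor
  · rintro ⟨a, ha, b, hb, rfl⟩ i _
    exact ⟨a i, ha i (Set.mem_univ i), b i, hb i (Set.mem_univ i), rfl⟩
  · intro hf
    choose a ha b hb hab using fun i => hf i (Set.mem_univ i)
    exact ⟨a, fun i _ => ha i, b, fun i _ => hb i, funext hab⟩

lemma pi_comm_iff (A B : ∀ i, Subgroup (G i)) :
    ((Subgroup.pi Set.univ A : Subgroup (∀ i, G i)) : Set (∀ i, G i)) *
        ((Subgroup.pi Set.univ B : Subgroup (∀ i, G i)) : Set (∀ i, G i)) =
      ((Subgroup.pi Set.univ B : Subgroup (∀ i, G i)) : Set (∀ i, G i)) *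
        ((Subgroup.pi Set.univ A : Subgroup (∀ i, G i)) : Set (∀ i, G i)) ↔
    ∀ i, (A i : Set (G i)) * (B i : Set (G i)) = (B i : Set (G i)) * (A i : Set (G i)) := by
  rw [coe_pi_mul, coe_pi_mul]
  constructor
  · intro h i
    have key : ∀ (S T : ∀ j, Set (G j)), Set.pi Set.univ S = Set.pi Set.univ T →
        (∀ j, (1 : G j) ∈ S j) → S i ⊆ T i := by
      intro S T hST h1 x hx
      have hmem : Pi.mulSingle i x ∈ Set.pi Set.univ S := by
        intro j _
        by_cases hji : j = i
        · subst hji; simpa using hx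
        · simpa [Pi.mulSingle_apply, hji] using h1 j
      rw [hST] at hmem
      simpa using hmem i (Set.mem_univ i)
    have h1 : ∀ j, (1 : G j) ∈ (A j : Set (G j)) * (B j : Set (G j)) :=
      fun j => ⟨1, (A j).one_mem, 1, (B j).one_mem, mul_one 1⟩
    have h2 : ∀ j, (1 : G j) ∈ (B j : Set (G j)) * (A j : Set (G j)) :=
      fun j => ⟨1, (B j).one_mem, 1, (A j).one_mem, mul_one 1⟩
    exact subset_antisymm (key _ _ h h1) (key _ _ h.symm h2)
  · intro h
    ext f
    simp only [Set.mem_pi]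
    exact ⟨fun hf i hi => (h i) ▸ hf i hi, fun hf i hi => (h i).symm ▸ hf i hi⟩

end pi

section pi2
variable {ι : Type*} [Fintype ι] [DecidableEq ι] {G : ι → Type*} [∀ i, Group (G i)]
  [∀ i, Finite (G i)] (hcop : Pairwise (Nat.Coprime on fun i => Nat.card (G i)))

include hcop

lemma isCyclic_iff_forall (H : Subgroup (∀ i, G i)) :
    IsCyclic ↥H ↔ ∀ i, IsCyclic ↥(H.map (Pi.evalMonoidHom G i)) := by
  constructor
  · intro h i
    haveI := h
    exact isCyclic_of_surjective _ ((Pi.evalMonoidHom G i).subgroupMap_surjective H)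
  · intro h
    have hsub : Pairwise (Nat.Coprime on
        fun i => Nat.card ↥(H.map (Pi.evalMonoidHom G i))) := fun i j hij =>
      ((hcop hij).coprime_dvd_left (Subgroup.card_subgroup_dvd_card _)).coprime_dvd_right
        (Subgroup.card_subgroup_dvd_card _)
    haveI := isCyclic_pi_type hsub h
    rw [subgroup_eq_pi hcop H]
    exact isCyclic_of_surjective (piSubgroupMulEquiv _).symm (piSubgroupMulEquiv _).symm.surjective

lemma comm_iff_forall (H K : Subgroup (∀ i, G i)) :
    ((H : Set (∀ i, G i)) * (K : Set (∀ i, G i)) = (K : Set (∀ i, G i)) * (H : Set (∀ i, G i))) ↔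
      ∀ i, ((H.map (Pi.evalMonoidHom G i) : Subgroup (G i)) : Set (G i)) *
          ((K.map (Pi.evalMonoidHom G i) : Subgroup (G i)) : Set (G i)) =
        ((K.map (Pi.evalMonoidHom G i) : Subgroup (G i)) : Set (G i)) *
          ((H.map (Pi.evalMonoidHom G i) : Subgroup (G i)) : Set (G i)) := by
  conv_lhs => rw [subgroup_eq_pi hcop H, subgroup_eq_pi hcop K]
  exact pi_comm_iff _ _

omit hcop in
def prodPiEquiv {γ δ : ι → Type*} : ((∀ i, γ i) × (∀ i, δ i)) ≃ ∀ i, γ i × δ i where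
  toFun p i := (p.1 i, p.2 i)
  invFun f := (fun i => (f i).1, fun i => (f i).2)
  left_inv _ := rfl
  right_inv _ := rfl

noncomputable def cyclicEquiv :
    {H : Subgroup (∀ i, G i) // IsCyclic ↥H} ≃ ∀ i, {H : Subgroup (G i) // IsCyclic ↥H} :=
  ((subgroupPiEquiv hcop).subtypeEquiv
    (fun H => isCyclic_iff_forall hcop H)).trans Equiv.subtypePiEquivPi

noncomputable def pairEquiv :
    {pr : Subgroup (∀ i, G i) × Subgroup (∀ i, G i) //
        IsCyclic ↥pr.1 ∧ IsCyclic ↥pr.2 ∧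
        (pr.1 : Set (∀ i, G i)) * (pr.2 : Set (∀ i, G i)) =
          (pr.2 : Set (∀ i, G i)) * (pr.1 : Set (∀ i, G i))} ≃
      ∀ i, {pr : Subgroup (G i) × Subgroup (G i) //
        IsCyclic ↥pr.1 ∧ IsCyclic ↥pr.2 ∧
        (pr.1 : Set (G i)) * (pr.2 : Set (G i)) = (pr.2 : Set (G i)) * (pr.1 : Set (G i))} :=
  ((((subgroupPiEquiv hcop).prodCongr (subgroupPiEquiv hcop)).trans prodPiEquiv).subtypeEquiv
    (fun pr =>
      ((isCyclic_iff_forall hcop pr.1).and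
        ((isCyclic_iff_forall hcop pr.2).and (comm_iff_forall hcop pr.1 pr.2))).trans
        ⟨fun h i => ⟨h.1 i, h.2.1 i, h.2.2 i⟩,
         fun h => ⟨fun i => (h i).1, fun i => (h i).2.1, fun i => (h i).2.2⟩⟩)).trans
    Equiv.subtypePiEquivPi

lemma csd_pi : csd (∀ i, G i) = ∏ i, csd (G i) := by
  unfold csd
  rw [Nat.card_congr (pairEquiv hcop), Nat.card_congr (cyclicEquiv hcop), Nat.card_pi,
    Nat.card_pi]
  push_cast
  rw [Finset.prod_div_distrib, Finset.prod_pow]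

end pi2

section congr
variable {G H : Type*} [Group G] [Group H]

lemma isCyclic_map_iff (e : G ≃* H) (K : Subgroup G) :
    IsCyclic ↥(K.map (e : G →* H)) ↔ IsCyclic ↥K :=
  ⟨fun h => by
      haveI := h
      exact isCyclic_of_surjective (e.subgroupMap K).symm (e.subgroupMap K).symm.surjective,
   fun h => by
      haveI := h
      exact isCyclic_of_surjective (e.subgroupMap K) (e.subgroupMap K).surjective⟩

lemma map_comm_iff (e : G ≃* H) (A B : Subgroup G) :
    ((A.map (e : G →* H) : Subgroup H) : Set H) * ((B.map (e : G →* H) : Subgroup H) : Set H) =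
        ((B.map (e : G →* H) : Subgroup H) : Set H) *
          ((A.map (e : G →* H) : Subgroup H) : Set H) ↔
      (A : Set G) * (B : Set G) = (B : Set G) * (A : Set G) := by
  rw [Subgroup.coe_map, Subgroup.coe_map, ← Set.image_mul (e : G →* H),
    ← Set.image_mul (e : G →* H)]
  exact Set.image_eq_image e.injective

/-- Subgroup correspondence under an isomorphism. -/
def subEquiv (e : G ≃* H) : Subgroup G ≃ Subgroup H where
  toFun K := K.map (e : G →* H)
  invFun K := K.map (e.symm : H →* G)
  left_inv K := by simp [Subgroup.map_map]
  right_inv K := by simp [Subgroup.map_map]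

lemma csd_congr (e : G ≃* H) : csd G = csd H := by
  unfold csd
  have h1 : Nat.card {pr : Subgroup G × Subgroup G //
      IsCyclic ↥pr.1 ∧ IsCyclic ↥pr.2 ∧
      (pr.1 : Set G) * (pr.2 : Set G) = (pr.2 : Set G) * (pr.1 : Set G)} =
      Nat.card {pr : Subgroup H × Subgroup H //
      IsCyclic ↥pr.1 ∧ IsCyclic ↥pr.2 ∧
      (pr.1 : Set H) * (pr.2 : Set H) = (pr.2 : Set H) * (pr.1 : Set H)} :=
    Nat.card_congr (((subEquiv e).prodCongr (subEquiv e)).subtypeEquiv (fun pr =>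
      ((isCyclic_map_iff e pr.1).symm.and
        ((isCyclic_map_iff e pr.2).symm.and (map_comm_iff e pr.1 pr.2).symm))))
  have h2 : Nat.card {K : Subgroup G // IsCyclic ↥K} =
      Nat.card {K : Subgroup H // IsCyclic ↥K} :=
    Nat.card_congr ((subEquiv e).subtypeEquiv (fun K => (isCyclic_map_iff e K).symm))
  rw [h1, h2]

end congr

theorem stmt_5 (G : Type*) [Group G] [Fintype G] (hnil : Group.IsNilpotent G)
    (P : ∀ p ∈ (Nat.card G).primeFactors, Sylow p G) :
    csd G = ∏ p ∈ (Nat.card G).primeFactors.attach, csd ↥((P p.1 p.2 : Subgroup G)) := by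
  classical
  have hnorm : ∀ (p : ℕ) (_ : Fact p.Prime) (Q : Sylow p G), (↑Q : Subgroup G).Normal :=
    ((isNilpotent_of_finite_tfae (G := G)).out 0 3).mp hnil
  obtain ⟨e⟩ :
      Nonempty ((∀ p : (Nat.card G).primeFactors, ∀ Q : Sylow p G, (↑Q : Subgroup G)) ≃* G) :=
    ((isNilpotent_of_finite_tfae (G := G)).out 0 4).mp hnil
  haveI : ∀ p : (Nat.card G).primeFactors, Fact (p : ℕ).Prime :=
    fun p => ⟨Nat.prime_of_mem_primeFactors p.2⟩
  haveI hU : ∀ p : (Nat.card G).primeFactors, Unique (Sylow (p : ℕ) G) :=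
    fun p => Sylow.unique_of_normal default (hnorm p inferInstance default)
  have hcard : ∀ p : (Nat.card G).primeFactors,
      Nat.card (∀ Q : Sylow (p : ℕ) G, ↥(Q : Subgroup G)) =
        (p : ℕ) ^ (Nat.card G).factorization p := by
    intro p
    rw [Nat.card_congr (Equiv.piUnique _)]
    exact Sylow.card_eq_multiplicity _
  have hcop : Pairwise (Nat.Coprime on
      fun p : (Nat.card G).primeFactors =>
        Nat.card (∀ Q : Sylow (p : ℕ) G, ↥(Q : Subgroup G))) := by
    intro p q hpq
    have hne : (p : ℕ) ≠ (q : ℕ) := fun h => hpq (Subtype.ext h)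
    have : Nat.Coprime ((p : ℕ) ^ (Nat.card G).factorization p)
        ((q : ℕ) ^ (Nat.card G).factorization q) :=
      Nat.Coprime.pow _ _ ((Nat.coprime_primes Fact.out Fact.out).mpr hne)
    simpa only [Function.onFun, hcard] using this
  rw [← csd_congr e, csd_pi hcop]
  rw [show Finset.univ = (Nat.card G).primeFactors.attach from rfl]
  apply Finset.prod_congr rfl
  intro p _
  have h1 : ((@default (Sylow (p : ℕ) G) Unique.instInhabited : Sylow (p : ℕ) G) : Subgroup G) = (P p.1 p.2 : Subgroup G) :=
    congrArg _ (Subsingleton.elim _ _)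
  exact csd_congr ((MulEquiv.piUnique (fun Q : Sylow (p : ℕ) G => ↥(Q : Subgroup G))).trans
    (MulEquiv.subgroupCongr h1))
end

section
/- Let p be an odd prime, n ≥ 2 an integer, q a prime dividing p − 1, and let G = G_{n,p} be the non-abelian P-group of order p^{n−1}q: G = M⟨x⟩, where M is elementary abelian of order p^{n−1}, x has order q, and there is an integer r with r ≢ 1 (mod p) such that x⁻¹yx = y^r for all y ∈ M. Then csd(G) = [(2 + p + p² + ⋯ + p^{n−2})(2 + p + p² + ⋯ + p^{n−1}) + p^{n−1}(3 + p + p² + ⋯ + p^{n−2})] / (2 + p + p² + ⋯ + p^{n−1})². -/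
open Pointwise

theorem stmt_6 (p q n : ℕ) (hp : p.Prime) (hodd : Odd p) (hn : 2 ≤ n)
    (hq : q.Prime) (hqd : q ∣ p - 1)
    (G : Type*) [Group G] [Fintype G]
    (M : Subgroup G) (hMnormal : M.Normal)
    (hMab : ∀ a ∈ M, ∀ b ∈ M, a * b = b * a)
    (hMelem : ∀ y ∈ M, y ^ p = 1)
    (hMcard : Nat.card M = p ^ (n - 1))
    (x : G) (hx : orderOf x = q)
    (hgen : M ⊔ Subgroup.zpowers x = ⊤)
    (hcard : Nat.card G = p ^ (n - 1) * q)
    (r : ℤ) (hr : (r : ZMod p) ≠ 1)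
    (hpow : ∀ y ∈ M, x⁻¹ * y * x = y ^ r) :
    csd G = ((1 + ∑ i ∈ Finset.range (n - 1), (p : ℚ) ^ i) *
          (1 + ∑ i ∈ Finset.range n, (p : ℚ) ^ i) +
        (p : ℚ) ^ (n - 1) * (2 + ∑ i ∈ Finset.range (n - 1), (p : ℚ) ^ i)) /
      (1 + ∑ i ∈ Finset.range n, (p : ℚ) ^ i) ^ 2 := by
  classical
  haveI : Fintype (Subgroup G) := Fintype.ofFinite _
  haveI := hMnormal
  haveI := Fact.mk hp
  haveI := Fact.mk hq
  -- numeric facts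
  have hp2 : 2 ≤ p := hp.two_le
  have hpne2 : p ≠ 2 := by rintro rfl; exact (Nat.not_odd_iff_even.mpr (by norm_num)) hodd
  have hp3 : 3 ≤ p := by omega
  have hqlt : q < p := lt_of_le_of_lt (Nat.le_of_dvd (by omega) hqd) (by omega)
  have hqnep : q ≠ p := Nat.ne_of_lt hqlt
  have hq2 : 2 ≤ q := hq.two_le
  obtain ⟨m, rfl⟩ : ∃ m, n = m + 2 := ⟨n - 2, by omega⟩
  simp only [show m + 2 - 1 = m + 1 from rfl] at *
  -- conjugation by powers of x
  have key : ∀ (k : ℕ), ∀ y ∈ M, (x ^ k)⁻¹ * y * x ^ k = y ^ ((r : ℤ) ^ k) := by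
    intro k
    induction k with
    | zero => intro y hy; simp
    | succ k ih =>
      intro y hy
      have h1 : (x ^ (k+1))⁻¹ * y * x ^ (k+1) = x⁻¹ * ((x ^ k)⁻¹ * y * x ^ k) * x := by
        rw [pow_succ]; group
      rw [h1, ih y hy]
      have h2 : x⁻¹ * y ^ ((r:ℤ) ^ k) * x = (x⁻¹ * y * x) ^ ((r:ℤ) ^ k) := by
        rw [show (x⁻¹ * y * x) = x⁻¹ * y * x⁻¹⁻¹ by group, conj_zpow]; group
      rw [h2, hpow y hy, ← zpow_mul]
      congr 1
      ring
  have conjM : ∀ m' ∈ M, ∀ y ∈ M, ∀ k : ℕ,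
      (m' * x ^ k)⁻¹ * y * (m' * x ^ k) = y ^ ((r : ℤ) ^ k) := by
    intro m' hm' y hy k
    have : m'⁻¹ * y * m' = y := by
      rw [mul_assoc, hMab y hy m' hm']; group
    rw [← key k y hy]
    rw [mul_inv_rev]
    calc (x ^ k)⁻¹ * m'⁻¹ * y * (m' * x ^ k) = (x ^ k)⁻¹ * (m'⁻¹ * y * m') * x ^ k := by group
    _ = (x ^ k)⁻¹ * y * x ^ k := by rw [this]
  -- r^q = 1 in ZMod p
  have rq1 : (r : ZMod p) ^ q = 1 := by
    have hdvd : p ∣ Fintype.card ↥M := by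
      rw [← Nat.card_eq_fintype_card, hMcard]; exact dvd_pow_self p (by omega)
    obtain ⟨g, hg⟩ := exists_prime_orderOf_dvd_card p hdvd
    have hyM : (g : G) ∈ M := g.2
    have hyo : orderOf (g : G) = p := by rw [Subgroup.orderOf_coe]; exact hg
    have hxq : x ^ q = 1 := by rw [← hx]; exact pow_orderOf_eq_one x
    have := key q (g : G) hyM
    rw [hxq] at this
    simp only [inv_one, one_mul, mul_one] at this
    have hz : (g : G) ^ ((r:ℤ) ^ q - 1) = 1 := by
      rw [zpow_sub, ← this, zpow_one, mul_inv_cancel]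
    have hdv : ((p : ℤ)) ∣ (r:ℤ) ^ q - 1 := by
      rw [← hyo]; exact orderOf_dvd_iff_zpow_eq_one.mpr hz
    have : (((r:ℤ) ^ q - 1 : ℤ) : ZMod p) = 0 := (ZMod.intCast_zmod_eq_zero_iff_dvd _ _).mpr hdv
    push_cast at this
    linear_combination this
  -- r^k ≠ 1 for q ∤ k
  have rknot1 : ∀ k : ℕ, ¬ (q ∣ k) → (r : ZMod p) ^ k ≠ 1 := by
    intro k hk hcon
    have h1 : orderOf (r : ZMod p) ∣ q := orderOf_dvd_of_pow_eq_one rq1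
    have h2 : orderOf (r : ZMod p) ≠ 1 := by
      intro h; exact hr (orderOf_eq_one_iff.mp h)
    have h3 : orderOf (r : ZMod p) = q := ((Nat.dvd_prime hq).mp h1).resolve_left h2
    exact hk (h3 ▸ orderOf_dvd_of_pow_eq_one hcon)
  -- fixed points of the action are trivial
  have fix : ∀ y ∈ M, ∀ k : ℕ, ¬ (q ∣ k) → y ^ ((r:ℤ) ^ k) = y → y = 1 := by
    intro y hy k hk hfix
    have hz : y ^ ((r:ℤ) ^ k - 1) = 1 := by
      rw [zpow_sub, hfix, zpow_one, mul_inv_cancel]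
    have h1 : (orderOf y : ℤ) ∣ (r:ℤ) ^ k - 1 := orderOf_dvd_iff_zpow_eq_one.mpr hz
    have h2 : orderOf y ∣ p := orderOf_dvd_of_pow_eq_one (hMelem y hy)
    rcases (Nat.dvd_prime hp).mp h2 with h | h
    · exact orderOf_eq_one_iff.mp h
    · exfalso
      apply rknot1 k hk
      have : (((r:ℤ) ^ k - 1 : ℤ) : ZMod p) = 0 := by
        apply (ZMod.intCast_zmod_eq_zero_iff_dvd _ _).mpr
        rw [← h]; exact_mod_cast h1
      push_cast at this
      linear_combination this
  -- decomposition of elements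
  have decomp : ∀ g : G, ∃ m' ∈ M, ∃ k : ℕ, k < q ∧ g = m' * x ^ k := by
    intro g
    have hg : g ∈ (M : Set G) * (Subgroup.zpowers x : Set G) := by
      rw [← Subgroup.normal_mul]
      rw [hgen]
      trivial
    obtain ⟨m', hm', z, hz, rfl⟩ := hg
    have hz' : z ∈ Submonoid.powers x := mem_powers_iff_mem_zpowers.mpr hz
    obtain ⟨k, rfl⟩ := hz'
    refine ⟨m', hm', k % q, ?_, ?_⟩
    · exact Nat.mod_lt _ (by omega)
    · have h := pow_mod_orderOf x k
      rw [hx] at h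
      rw [h]
  -- every element outside M has order q
  have hordq : ∀ g : G, g ∉ M → orderOf g = q := by
    intro g hgM
    obtain ⟨m', hm', k, hkq, rfl⟩ := decomp g
    have hk0 : k ≠ 0 := by
      rintro rfl
      simp only [pow_zero, mul_one] at hgM
      exact hgM hm'
    have hqk : ¬ (q ∣ k) := by
      intro h
      rcases h with ⟨c, rfl⟩
      rcases Nat.eq_zero_or_pos c with rfl | hc
      · omega
      · have : q * 1 ≤ q * c := Nat.mul_le_mul_left q hc
        omega
    set g := m' * x ^ k with hgdef
    have pows : ∀ j : ℕ, ∃ c ∈ M, g ^ j = c * x ^ (k * j) := by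
      intro j
      induction j with
      | zero => exact ⟨1, M.one_mem, by simp⟩
      | succ j ih =>
        obtain ⟨c, hc, hcj⟩ := ih
        refine ⟨c * (x ^ (k*j) * m' * (x ^ (k*j))⁻¹), M.mul_mem hc
          (hMnormal.conj_mem m' hm' (x ^ (k*j))), ?_⟩
        rw [pow_succ, hcj, hgdef]
        rw [show k * (j + 1) = k * j + k by ring, pow_add]
        group
    obtain ⟨c, hc, hcq⟩ := pows q
    have hxq : x ^ q = 1 := by rw [← hx]; exact pow_orderOf_eq_one x
    have hxkq : x ^ (k * q) = 1 := by
      rw [mul_comm, pow_mul, hxq, one_pow]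
    have hgq : g ^ q = c := by rw [hcq, hxkq, mul_one]
    have hgqM : g ^ q ∈ M := hgq ▸ hc
    have hfix : (g ^ q) ^ ((r:ℤ) ^ k) = g ^ q := by
      have := conjM m' hm' (g ^ q) hgqM k
      rw [← hgdef] at this
      rw [← this]
      group
    have hgq1 : g ^ q = 1 := fix _ hgqM k hqk hfix
    have hdvd : orderOf g ∣ q := orderOf_dvd_of_pow_eq_one hgq1
    rcases (Nat.dvd_prime hq).mp hdvd with h | h
    · exfalso
      apply hgM
      rw [orderOf_eq_one_iff.mp h]
      exact M.one_mem
    · exact h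
  -- cyclic subgroups are generated by a single element of G
  have hrep : ∀ H : Subgroup G, IsCyclic ↥H → ∃ g : G, g ∈ H ∧ H = Subgroup.zpowers g := by
    intro H hH
    obtain ⟨g, hg⟩ := hH.exists_generator
    refine ⟨(g : G), g.2, le_antisymm ?_ (Subgroup.zpowers_le.mpr g.2)⟩
    intro h hh
    obtain ⟨k, hk⟩ := hg ⟨h, hh⟩
    refine ⟨k, ?_⟩
    have := congrArg (Subtype.val) hk
    simpa using this
  -- classification of cyclic subgroups
  have hclass : ∀ H : Subgroup G, IsCyclic ↥H → H ≤ M ∨ Nat.card H = q := by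
    intro H hH
    obtain ⟨g, hgH, rfl⟩ := hrep H hH
    by_cases hgM : g ∈ M
    · exact Or.inl (Subgroup.zpowers_le.mpr hgM)
    · right
      rw [Nat.card_zpowers]
      exact hordq g hgM
  -- subgroups of M are normal
  have hnor : ∀ H : Subgroup G, H ≤ M → H.Normal := by
    intro H hHM
    constructor
    intro h hh g
    obtain ⟨m', hm', k, _, hgi⟩ := decomp g⁻¹
    have hconj := conjM m' hm' h (hHM hh) k
    rw [← hgi] at hconj
    have : g * h * g⁻¹ = h ^ ((r:ℤ) ^ k) := by
      rw [← hconj]; group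
    rw [this]
    exact H.zpow_mem hh _
  -- subgroups contained in M permute with everything
  have permM : ∀ H K : Subgroup G, H ≤ M →
      (H : Set G) * (K : Set G) = (K : Set G) * (H : Set G) := by
    intro H K hHM
    haveI := hnor H hHM
    rw [← Subgroup.normal_mul H K, ← Subgroup.mul_normal K H, sup_comm]
  -- distinct subgroups of order q do not permute
  have nonperm : ∀ H K : Subgroup G, Nat.card H = q → Nat.card K = q → H ≠ K →
      (H : Set G) * (K : Set G) ≠ (K : Set G) * (H : Set G) := by
    intro H K hHq hKq hne hcomm
    set S : Subgroup G :=
      { carrier := (H : Set G) * (K : Set G)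
        one_mem' := ⟨1, H.one_mem, 1, K.one_mem, mul_one 1⟩
        mul_mem' := by
          rintro a b ⟨h1, hh1, k1, hk1, rfl⟩ ⟨h2, hh2, k2, hk2, rfl⟩
          have : k1 * h2 ∈ (K : Set G) * (H : Set G) := ⟨k1, hk1, h2, hh2, rfl⟩
          rw [← hcomm] at this
          obtain ⟨h3, hh3, k3, hk3, heq⟩ := this
          refine ⟨h1 * h3, H.mul_mem hh1 hh3, k3 * k2, K.mul_mem hk3 hk2, ?_⟩
          calc h1 * h3 * (k3 * k2) = h1 * (h3 * k3) * k2 := by group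
            _ = h1 * (k1 * h2) * k2 := by
                have heq' : h3 * k3 = k1 * h2 := heq
                rw [heq']
            _ = h1 * k1 * (h2 * k2) := by group
        inv_mem' := by
          rintro a ⟨h1, hh1, k1, hk1, rfl⟩
          have : k1⁻¹ * h1⁻¹ ∈ (K : Set G) * (H : Set G) := ⟨k1⁻¹, K.inv_mem hk1, h1⁻¹, H.inv_mem hh1, rfl⟩
          rw [← hcomm] at this
          simpa [mul_inv_rev] using this } with hSdef
    have hHS : H ≤ S := by
      intro h hh
      exact ⟨h, hh, 1, K.one_mem, mul_one h⟩
    have hKS : K ≤ S := by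
      intro k hk
      exact ⟨1, H.one_mem, k, hk, one_mul k⟩
    have hcardS_le : Nat.card S ≤ q * q := by
      have h1 : Nat.card S = Nat.card ((H : Set G) * (K : Set G) : Set G) := rfl
      rw [h1]
      calc Nat.card ((H : Set G) * (K : Set G) : Set G)
          ≤ Nat.card (H : Set G) * Nat.card (K : Set G) := Set.natCard_mul_le
        _ = q * q := by rw [show Nat.card (H : Set G) = Nat.card H from rfl,
            show Nat.card (K : Set G) = Nat.card K from rfl, hHq, hKq]
    have hqS : q ∣ Nat.card S := hHq ▸ Subgroup.card_dvd_of_le hHS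
    obtain ⟨d, hd⟩ := hqS
    have hSG : Nat.card S ∣ p ^ (m + 1) * q := hcard ▸ Subgroup.card_subgroup_dvd_card S
    have hdp : d ∣ p ^ (m + 1) := by
      have : q * d ∣ q * p ^ (m + 1) := by
        rw [← hd, mul_comm q (p ^ (m+1))]; exact hSG
      exact (mul_dvd_mul_iff_left (by omega : q ≠ 0)).mp this
    rcases eq_or_ne d 1 with rfl | hd1
    · rw [mul_one] at hd
      have hHSeq : H = S := Subgroup.eq_of_le_of_card_ge hHS (by omega)
      have hKSeq : K = S := Subgroup.eq_of_le_of_card_ge hKS (by omega)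
      exact hne (hHSeq.trans hKSeq.symm)
    · obtain ⟨f, hf, hfd⟩ := Nat.exists_prime_and_dvd hd1
      have hfp : f = p := by
        have : f ∣ p := hf.dvd_of_dvd_pow (hfd.trans hdp)
        exact (Nat.prime_dvd_prime_iff_eq hf hp).mp this
      have hdpos : 0 < d := Nat.pos_of_dvd_of_pos hdp (by positivity)
      have hpd : p ≤ d := hfp ▸ Nat.le_of_dvd hdpos hfd
      have : q * q < Nat.card S := by
        rw [hd]
        calc q * q < q * p := by nlinarith
          _ ≤ q * d := Nat.mul_le_mul (le_refl q) hpd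
      omega
  -- the three finsets of cyclic subgroups
  set Tfin : Finset (Subgroup G) :=
    Finset.univ.filter (fun H => H ≤ M ∧ Nat.card H = p) with hTfin
  set Bfin : Finset (Subgroup G) :=
    Finset.univ.filter (fun H => Nat.card H = q) with hBfin
  set Cfin : Finset (Subgroup G) :=
    Finset.univ.filter (fun H => IsCyclic ↥H) with hCfin
  set t := Tfin.card with htdef
  set b := Bfin.card with hbdef
  set L := Cfin.card with hLdef
  have memT : ∀ H : Subgroup G, H ∈ Tfin ↔ (H ≤ M ∧ Nat.card H = p) := by
    intro H; rw [hTfin]; simp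
  have memB : ∀ H : Subgroup G, H ∈ Bfin ↔ Nat.card H = q := by
    intro H; rw [hBfin]; simp
  have memC : ∀ H : Subgroup G, H ∈ Cfin ↔ IsCyclic ↥H := by
    intro H; rw [hCfin]; simp
  have toFcard : ∀ H : Subgroup G, (H : Set G).toFinset.card = Nat.card H := by
    intro H
    rw [Set.toFinset_card, Nat.card_eq_fintype_card]
    rfl
  have erase_card : ∀ H : Subgroup G, ((H : Set G).toFinset.erase 1).card = Nat.card H - 1 := by
    intro H
    rw [Finset.card_erase_of_mem (Set.mem_toFinset.mpr H.one_mem), toFcard]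
  -- order of elements of M
  have hordM : ∀ g : G, g ∈ M → g ≠ 1 → orderOf g = p := by
    intro g hg hg1
    have h1 : orderOf g ∣ p := orderOf_dvd_of_pow_eq_one (hMelem g hg)
    rcases (Nat.dvd_prime hp).mp h1 with h | h
    · exact absurd (orderOf_eq_one_iff.mp h) hg1
    · exact h
  -- counting subgroups of order q
  have hbval : b = p ^ (m + 1) := by
    have hsrc : (Finset.univ.filter (fun g : G => g ∉ M)).card = p ^ (m+1) * (q - 1) := by
      have h1 : (Finset.univ.filter (fun g : G => g ∈ M)).card = p ^ (m+1) := by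
        rw [← Fintype.card_subtype, ← Nat.card_eq_fintype_card]
        exact hMcard
      have h2 := Finset.card_filter_add_card_filter_not
        (s := (Finset.univ : Finset G)) (p := fun g : G => g ∈ M)
      have h3 : (Finset.univ : Finset G).card = p ^ (m+1) * q := by
        rw [Finset.card_univ, ← Nat.card_eq_fintype_card]
        exact hcard
      have h4 : p ^ (m+1) * (q-1) = p ^ (m+1) * q - p ^ (m+1) := by
        rw [Nat.mul_sub]; omega
      omega
    have hcount : (Finset.univ.filter (fun g : G => g ∉ M)).card = b * (q - 1) := by
      rw [Finset.card_eq_sum_card_fiberwise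
        (f := fun g : G => Subgroup.zpowers g) (t := Bfin) (fun g hg => by
          rw [Finset.mem_coe, Finset.mem_filter] at hg
          rw [Finset.mem_coe, memB, Nat.card_zpowers]
          exact hordq g hg.2)]
      rw [Finset.sum_congr rfl (fun H hH => ?_), Finset.sum_const, smul_eq_mul]
      have hHq : Nat.card H = q := (memB H).mp hH
      have hfib : (Finset.univ.filter (fun g : G => g ∉ M)).filter
          (fun g => Subgroup.zpowers g = H) = (H : Set G).toFinset.erase 1 := by
        ext g
        simp only [Finset.mem_filter, Finset.mem_univ, true_and, Finset.mem_erase,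
          Set.mem_toFinset, SetLike.mem_coe]
        constructor
        · rintro ⟨hgM, hz⟩
          refine ⟨?_, hz ▸ Subgroup.mem_zpowers g⟩
          rintro rfl
          rw [Subgroup.zpowers_one_eq_bot] at hz
          rw [← hz, Subgroup.card_bot] at hHq
          omega
        · rintro ⟨hg1, hgH⟩
          have hog : orderOf g = q := by
            have h1 : orderOf g ∣ q := hHq ▸ Subgroup.orderOf_dvd_natCard H hgH
            rcases (Nat.dvd_prime hq).mp h1 with h | h
            · exact absurd (orderOf_eq_one_iff.mp h) hg1
            · exact h
          have hgM : g ∉ M := by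
            intro hgM
            rw [hordM g hgM hg1] at hog
            exact hqnep hog.symm
          refine ⟨hgM, Subgroup.eq_of_le_of_card_ge (Subgroup.zpowers_le.mpr hgH) ?_⟩
          rw [Nat.card_zpowers, hog, hHq]
      rw [hfib, erase_card, hHq]
    rw [hcount] at hsrc
    exact Nat.eq_of_mul_eq_mul_right (by omega) hsrc
  -- counting subgroups of order p inside M
  have htval : t * (p - 1) = p ^ (m + 1) - 1 := by
    have hsrc : ((M : Set G).toFinset.erase 1).card = p ^ (m+1) - 1 := by
      rw [erase_card, hMcard]
    have hcount : ((M : Set G).toFinset.erase 1).card = t * (p - 1) := by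
      rw [Finset.card_eq_sum_card_fiberwise
        (f := fun g : G => Subgroup.zpowers g) (t := Tfin) (fun g hg => by
          rw [Finset.mem_coe, Finset.mem_erase, Set.mem_toFinset, SetLike.mem_coe] at hg
          rw [Finset.mem_coe, memT]
          constructor
          · exact Subgroup.zpowers_le.mpr hg.2
          · rw [Nat.card_zpowers]; exact hordM g hg.2 hg.1)]
      rw [Finset.sum_congr rfl (fun H hH => ?_), Finset.sum_const, smul_eq_mul]
      obtain ⟨hHM, hHp⟩ := (memT H).mp hH
      have hfib : ((M : Set G).toFinset.erase 1).filter
          (fun g => Subgroup.zpowers g = H) = (H : Set G).toFinset.erase 1 := by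
        ext g
        simp only [Finset.mem_filter, Finset.mem_erase, Set.mem_toFinset, SetLike.mem_coe]
        constructor
        · rintro ⟨⟨hg1, _⟩, hz⟩
          exact ⟨hg1, hz ▸ Subgroup.mem_zpowers g⟩
        · rintro ⟨hg1, hgH⟩
          refine ⟨⟨hg1, hHM hgH⟩, Subgroup.eq_of_le_of_card_ge (Subgroup.zpowers_le.mpr hgH) ?_⟩
          rw [Nat.card_zpowers, hordM g (hHM hgH) hg1, hHp]
      rw [hfib, erase_card, hHp]
    omega
  -- the cyclic subgroups are exactly ⊥, the T's and the B's
  have hCeq : Cfin = insert ⊥ (Tfin ∪ Bfin) := by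
    ext H
    rw [memC, Finset.mem_insert, Finset.mem_union, memT, memB]
    constructor
    · intro hcyc
      rcases hclass H hcyc with hHM | hHq
      · by_cases hbot : H = ⊥
        · exact Or.inl hbot
        · refine Or.inr (Or.inl ⟨hHM, ?_⟩)
          obtain ⟨g, hgH, rfl⟩ := hrep H hcyc
          have hg1 : g ≠ 1 := by
            rintro rfl
            exact hbot Subgroup.zpowers_one_eq_bot
          rw [Nat.card_zpowers]
          exact hordM g (hHM hgH) hg1
      · exact Or.inr (Or.inr hHq)
    · rintro (rfl | ⟨_, hHp⟩ | hHq)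
      · infer_instance
      · exact isCyclic_of_prime_card hHp
      · exact isCyclic_of_prime_card hHq
  have hLval : L = 1 + t + b := by
    have hbotT : (⊥ : Subgroup G) ∉ Tfin ∪ Bfin := by
      rw [Finset.mem_union, memT, memB, Subgroup.card_bot]
      push_neg
      exact ⟨fun _ => by omega, by omega⟩
    have hdisj : Disjoint Tfin Bfin := by
      rw [Finset.disjoint_left]
      intro H hT hB
      rw [memT] at hT
      rw [memB] at hB
      rw [hT.2] at hB
      exact hqnep hB.symm
    rw [hLdef, hCeq, Finset.card_insert_of_notMem hbotT, Finset.card_union_of_disjoint hdisj]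
    omega
  have hcyc_card : Nat.card {H : Subgroup G // IsCyclic ↥H} = L := by
    rw [Nat.card_eq_fintype_card, Fintype.card_subtype]
  have hpairs : Nat.card {pr : Subgroup G × Subgroup G //
      IsCyclic ↥pr.1 ∧ IsCyclic ↥pr.2 ∧
      (pr.1 : Set G) * (pr.2 : Set G) = (pr.2 : Set G) * (pr.1 : Set G)}
      = L * L - (b * b - b) := by
    rw [Nat.card_eq_fintype_card, Fintype.card_subtype]
    have hset : Finset.univ.filter (fun pr : Subgroup G × Subgroup G =>
        IsCyclic ↥pr.1 ∧ IsCyclic ↥pr.2 ∧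
          (pr.1 : Set G) * (pr.2 : Set G) = (pr.2 : Set G) * (pr.1 : Set G))
        = (Cfin ×ˢ Cfin) \ Bfin.offDiag := by
      ext pr
      simp only [Finset.mem_filter, Finset.mem_univ, true_and, Finset.mem_sdiff,
        Finset.mem_product, Finset.mem_offDiag]
      constructor
      · rintro ⟨h1, h2, h3⟩
        refine ⟨⟨(memC _).mpr h1, (memC _).mpr h2⟩, ?_⟩
        rintro ⟨hB1, hB2, hne⟩
        exact nonperm pr.1 pr.2 ((memB _).mp hB1) ((memB _).mp hB2) hne h3
      · rintro ⟨⟨hC1, hC2⟩, hnd⟩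
        have h1 := (memC _).mp hC1
        have h2 := (memC _).mp hC2
        refine ⟨h1, h2, ?_⟩
        rcases hclass pr.1 h1 with hM1 | hq1
        · exact permM pr.1 pr.2 hM1
        · rcases hclass pr.2 h2 with hM2 | hq2
          · exact (permM pr.2 pr.1 hM2).symm
          · by_cases heq : pr.1 = pr.2
            · rw [heq]
            · exact absurd ⟨(memB _).mpr hq1, (memB _).mpr hq2, heq⟩ hnd
    rw [hset, Finset.card_sdiff_of_subset, Finset.card_product, Finset.offDiag_card]
    · intro pr hpr
      rw [Finset.mem_offDiag] at hpr
      rw [Finset.mem_product]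
      constructor
      · rw [memC]; exact isCyclic_of_prime_card ((memB _).mp hpr.1)
      · rw [memC]; exact isCyclic_of_prime_card ((memB _).mp hpr.2.1)
  have hbL : b ≤ L := by
    apply Finset.card_le_card
    intro H hH
    rw [hBfin, Finset.mem_filter] at hH
    rw [hCfin, Finset.mem_filter]
    exact ⟨Finset.mem_univ _, isCyclic_of_prime_card hH.2⟩
  -- assemble
  rw [csd, hcyc_card, hpairs]
  have hbpos : 0 < b := by rw [hbval]; positivity
  have hbb : b ≤ b * b := Nat.le_mul_of_pos_left b hbpos
  have hbbL : b * b - b ≤ L * L := le_trans (Nat.sub_le _ _) (Nat.mul_le_mul hbL hbL)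
  rw [Nat.cast_sub hbbL, Nat.cast_sub hbb]
  push_cast
  -- rational arithmetic
  set Sa : ℚ := ∑ i ∈ Finset.range (m + 1), (p : ℚ) ^ i with hSa
  set Sb : ℚ := ∑ i ∈ Finset.range (m + 2), (p : ℚ) ^ i with hSb
  have hSbSa : Sb = Sa + (p : ℚ) ^ (m + 1) := by
    rw [hSb, Finset.sum_range_succ]
  have hpQ : (1 : ℚ) < (p : ℚ) := by exact_mod_cast hp.one_lt
  have htQ : (t : ℚ) = Sa := by
    have h1 : (t : ℚ) * ((p : ℚ) - 1) = (p : ℚ) ^ (m + 1) - 1 := by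
      have := htval
      have hcast : ((t * (p - 1) : ℕ) : ℚ) = ((p ^ (m + 1) - 1 : ℕ) : ℚ) := by
        exact_mod_cast congrArg (Nat.cast : ℕ → ℚ) this
      rw [Nat.cast_mul, Nat.cast_sub (by omega), Nat.cast_sub (Nat.one_le_pow _ _ (by omega))] at hcast
      push_cast at hcast
      exact hcast
    have h2 : Sa * ((p : ℚ) - 1) = (p : ℚ) ^ (m + 1) - 1 := geom_sum_mul _ _
    have h3 : ((p : ℚ) - 1) ≠ 0 := by
      intro h; apply absurd hpQ; rw [show (p:ℚ) = 1 by linarith]; exact lt_irrefl 1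
    rw [← h2] at h1
    exact mul_right_cancel₀ h3 h1
  have hbQ : (b : ℚ) = (p : ℚ) ^ (m + 1) := by rw [hbval]; push_cast; ring
  have hLQ : (L : ℚ) = 1 + Sb := by
    rw [hLval]; push_cast; rw [htQ, hbQ, hSbSa]; ring
  rw [hLQ, hbQ, hSbSa]
  rw [show ((1:ℚ) + (Sa + (p:ℚ)^(m+1)))^2 = (1 + (Sa + (p:ℚ)^(m+1))) * (1 + (Sa + (p:ℚ)^(m+1))) by ring]
  congr 1
  ring
end

section
/- Let m ≥ 2 and let D_{2m} = ⟨x, y | x^m = y² = 1, yxy = x⁻¹⟩ be the dihedral group of order 2m, and let τ(m) denote the number of positive divisors of m. If m is odd then csd(D_{2m}) = [τ(m)(τ(m) + m) + m(τ(m) + 1)] / (τ(m) + m)², and if m is even then csd(D_{2m}) = [τ(m)(τ(m) + m) + m(τ(m) + 2)] / (τ(m) + m)². -/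
open Pointwise

namespace CsdDihedral

open Subgroup DihedralGroup

variable {m : ℕ}

/-- zpowers of any element is cyclic. -/
lemma isCyclic_zpowers {G : Type*} [Group G] (g : G) : IsCyclic (zpowers g) := by
  refine ⟨⟨⟨g, mem_zpowers g⟩, ?_⟩⟩
  rintro ⟨x, hx⟩
  obtain ⟨k, hk⟩ := mem_zpowers_iff.mp hx
  exact mem_zpowers_iff.mpr ⟨k, by ext; simp [hk]⟩

lemma eq_zpowers_of_isCyclic {G : Type*} [Group G] {H : Subgroup G} (h : IsCyclic H) :
    ∃ g : G, H = zpowers g := by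
  obtain ⟨⟨g, hgH⟩, hg⟩ := h.exists_generator
  refine ⟨g, le_antisymm ?_ ?_⟩
  · intro x hx
    obtain ⟨k, hk⟩ := mem_zpowers_iff.mp (hg ⟨x, hx⟩)
    exact mem_zpowers_iff.mpr ⟨k, congrArg Subtype.val hk⟩
  · exact zpowers_le.mpr hgH

/-- The subgroup of rotations in a given additive subgroup of indices. -/
def phi (A : AddSubgroup (ZMod m)) : Subgroup (DihedralGroup m) where
  carrier := {g | ∃ i ∈ A, r i = g}
  one_mem' := ⟨0, A.zero_mem, one_def.symm⟩
  mul_mem' := by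
    rintro _ _ ⟨i, hi, rfl⟩ ⟨j, hj, rfl⟩
    exact ⟨i + j, A.add_mem hi hj, (r_mul_r i j).symm⟩
  inv_mem' := by
    rintro _ ⟨i, hi, rfl⟩
    exact ⟨-i, A.neg_mem hi, rfl⟩

lemma r_mem_phi {A : AddSubgroup (ZMod m)} {i : ZMod m} : r i ∈ phi A ↔ i ∈ A := by
  constructor
  · rintro ⟨j, hj, hji⟩
    obtain rfl : j = i := by injection hji
    exact hj
  · exact fun h => ⟨i, h, rfl⟩

lemma sr_not_mem_phi {A : AddSubgroup (ZMod m)} {i : ZMod m} : sr i ∉ phi A := by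
  rintro ⟨j, hj, hji⟩
  exact absurd hji (by simp)

lemma phi_injective : Function.Injective (phi (m := m)) := by
  intro A B h
  ext i
  rw [← r_mem_phi (A := A), ← r_mem_phi (A := B), h]

lemma phi_le [NeZero m] (A : AddSubgroup (ZMod m)) : phi A ≤ zpowers (r 1) := by
  rintro _ ⟨i, hi, rfl⟩
  refine mem_zpowers_iff.mpr ⟨(i.val : ℤ), ?_⟩
  rw [zpow_natCast, r_one_pow, ZMod.natCast_val, ZMod.cast_id]

lemma isCyclic_phi [NeZero m] (A : AddSubgroup (ZMod m)) : IsCyclic (phi A) := by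
  have := isCyclic_zpowers (r 1 : DihedralGroup m)
  exact Subgroup.isCyclic_of_le (phi_le A)

lemma normal_phi (A : AddSubgroup (ZMod m)) : (phi A).Normal := by
  constructor
  rintro _ ⟨i, hi, rfl⟩ g
  cases g with
  | r j =>
    refine ⟨i, hi, ?_⟩
    have h1 : (r j)⁻¹ = r (-j) := rfl
    rw [h1, r_mul_r, r_mul_r]
    congr 1
    ring
  | sr j =>
    refine ⟨-i, A.neg_mem hi, ?_⟩
    have h1 : (sr j)⁻¹ = sr j := rfl
    rw [h1, sr_mul_r, sr_mul_sr]
    congr 1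
    ring

lemma r_pow (i : ZMod m) (n : ℕ) : (r i) ^ n = r (n • i) := by
  induction n with
  | zero => simp [one_def, -r_zero]
  | succ n ih => rw [pow_succ, ih, r_mul_r, succ_nsmul]

lemma r_zpow (i : ZMod m) (k : ℤ) : (r i) ^ k = r (k • i) := by
  cases k with
  | ofNat n => simpa using r_pow i n
  | negSucc n =>
    rw [zpow_negSucc, r_pow]
    show _ = r (Int.negSucc n • i)
    rw [Int.negSucc_eq, ← Nat.cast_succ, neg_smul, natCast_zsmul]
    rfl

lemma zpowers_r_eq_phi (i : ZMod m) :
    zpowers (r i) = phi (AddSubgroup.zmultiples i) := by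
  ext x
  rw [mem_zpowers_iff]
  constructor
  · rintro ⟨k, rfl⟩
    exact ⟨k • i, ⟨k, rfl⟩, (r_zpow i k).symm⟩
  · rintro ⟨_, ⟨k, rfl⟩, rfl⟩
    exact ⟨k, r_zpow i k⟩

lemma sr_sq (a : ZMod m) : (sr a) * (sr a) = 1 := by
  rw [sr_mul_sr, sub_self, one_def]

lemma coe_zpowers_sr (a : ZMod m) :
    ((zpowers (sr a) : Subgroup (DihedralGroup m)) : Set (DihedralGroup m)) = {1, sr a} := by
  ext x
  simp only [SetLike.mem_coe, mem_zpowers_iff, Set.mem_insert_iff, Set.mem_singleton_iff]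
  constructor
  · rintro ⟨k, rfl⟩
    have h2 : orderOf (sr a : DihedralGroup m) = 2 := orderOf_sr a
    rw [← zpow_mod_orderOf, h2]
    rcases Int.emod_two_eq_zero_or_one k with h | h <;>
      rw [show ((2:ℕ):ℤ) = 2 from rfl, h]
    · left; simp
    · right; simp
  · rintro (rfl | rfl)
    exacts [⟨0, by simp⟩, ⟨1, by simp⟩]

lemma zpowers_sr_injective : Function.Injective (fun a : ZMod m => zpowers (sr a)) := by
  intro a b h
  dsimp only at h
  have h2 : sr a ∈ zpowers (sr b) := h ▸ mem_zpowers (sr a)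
  rw [← SetLike.mem_coe, coe_zpowers_sr] at h2
  rcases h2 with h1 | h1
  · simp [one_def, -r_zero] at h1
  · injection h1

/-- Classification of cyclic subgroups of the dihedral group. -/
lemma classify {H : Subgroup (DihedralGroup m)} (hH : IsCyclic H) :
    (∃ A, H = phi A) ∨ (∃ a, H = zpowers (sr a)) := by
  obtain ⟨g, rfl⟩ := eq_zpowers_of_isCyclic hH
  cases g with
  | r i => exact Or.inl ⟨_, zpowers_r_eq_phi i⟩
  | sr i => exact Or.inr ⟨i, rfl⟩


/-! ### Counting subgroups of `ZMod m` -/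

lemma eq_zmultiples_of_isAddCyclic {G : Type*} [AddGroup G] {H : AddSubgroup G}
    (h : IsAddCyclic H) : ∃ g : G, H = AddSubgroup.zmultiples g := by
  obtain ⟨⟨g, hgH⟩, hg⟩ := h.exists_generator
  refine ⟨g, le_antisymm ?_ ?_⟩
  · intro x hx
    obtain ⟨k, hk⟩ := AddSubgroup.mem_zmultiples_iff.mp (hg ⟨x, hx⟩)
    exact AddSubgroup.mem_zmultiples_iff.mpr ⟨k, congrArg Subtype.val hk⟩
  · rintro x ⟨k, rfl⟩
    exact AddSubgroup.zsmul_mem H hgH k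

lemma natCast_val_eq [NeZero m] (t : ZMod m) : ((t.val : ℕ) : ZMod m) = t := by
  rw [ZMod.natCast_val, ZMod.cast_id]

/-- the map from divisors of `m` to subgroups of `ZMod m`. -/
noncomputable def divEquiv [NeZero m] :
    {d : ℕ // d ∈ m.divisors} ≃ AddSubgroup (ZMod m) := by
  have hm0 : m ≠ 0 := NeZero.ne m
  refine Equiv.ofBijective
    (fun d => AddSubgroup.zmultiples ((d.1 : ℕ) : ZMod m)) ⟨?_, ?_⟩
  · rintro ⟨d, hd⟩ ⟨e, he⟩ h
    simp only at h
    rw [Nat.mem_divisors] at hd he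
    have hcard : ∀ f : ℕ, f ∣ m →
        Nat.card (AddSubgroup.zmultiples ((f : ℕ) : ZMod m)) = m / f := by
      intro f hf
      rw [Nat.card_zmultiples, ZMod.addOrderOf_coe f hm0, Nat.gcd_eq_right hf]
    have h2 : m / d = m / e := by
      have hc := congrArg (fun A : AddSubgroup (ZMod m) => Nat.card A) h
      rw [hcard d hd.1, hcard e he.1] at hc
      exact hc
    refine Subtype.ext ?_
    have h3 : m / (m / d) = m / (m / e) := by rw [h2]
    rwa [Nat.div_div_self hd.1 hm0, Nat.div_div_self he.1 hm0] at h3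
  · intro H
    have : IsAddCyclic H := by
      have : IsAddCyclic (ZMod m) := inferInstance
      infer_instance
    obtain ⟨x, rfl⟩ := eq_zmultiples_of_isAddCyclic this
    refine ⟨⟨Nat.gcd m x.val, Nat.mem_divisors.mpr ⟨Nat.gcd_dvd_left m x.val, hm0⟩⟩, ?_⟩
    simp only
    have hsub1 : AddSubgroup.zmultiples ((Nat.gcd m x.val : ℕ) : ZMod m)
        ≤ AddSubgroup.zmultiples x := by
      rintro _ ⟨k, rfl⟩
      refine AddSubgroup.zsmul_mem _ ?_ k
      refine AddSubgroup.mem_zmultiples_iff.mpr ⟨Nat.gcdB m x.val, ?_⟩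
      have hb := Nat.gcd_eq_gcd_ab m x.val
      have := congrArg (fun z : ℤ => (z : ZMod m)) hb
      push_cast at this
      rw [ZMod.natCast_self, natCast_val_eq] at this
      rw [zsmul_eq_mul, mul_comm]
      rw [this]
      ring
    have hsub2 : AddSubgroup.zmultiples x
        ≤ AddSubgroup.zmultiples ((Nat.gcd m x.val : ℕ) : ZMod m) := by
      rintro _ ⟨k, rfl⟩
      refine AddSubgroup.zsmul_mem _ ?_ k
      refine AddSubgroup.mem_zmultiples_iff.mpr ⟨(x.val / Nat.gcd m x.val : ℕ), ?_⟩
      have hdvd : Nat.gcd m x.val ∣ x.val := Nat.gcd_dvd_right m x.val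
      rw [natCast_zsmul, nsmul_eq_mul, ← Nat.cast_mul, Nat.div_mul_cancel hdvd,
        natCast_val_eq]
    exact le_antisymm hsub1 hsub2

lemma card_addSubgroup [NeZero m] :
    Nat.card (AddSubgroup (ZMod m)) = m.divisors.card := by
  rw [← Nat.card_congr (divEquiv (m := m)), Nat.card_eq_finsetCard]

/-! ### The classification bijection -/

/-- the enumeration of cyclic subgroups of the dihedral group. -/
def F [NeZero m] : AddSubgroup (ZMod m) ⊕ ZMod m →
    {H : Subgroup (DihedralGroup m) // IsCyclic H}
  | .inl A => ⟨phi A, isCyclic_phi A⟩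
  | .inr a => ⟨zpowers (sr a), isCyclic_zpowers _⟩

lemma F_bijective [NeZero m] : Function.Bijective (F (m := m)) := by
  constructor
  · rintro (A | a) (B | b) h <;> simp only [F, Subtype.mk.injEq] at h
    · exact congrArg Sum.inl (phi_injective h)
    · exact absurd (h ▸ mem_zpowers (sr b) : sr b ∈ phi A) sr_not_mem_phi
    · exact absurd (h.symm ▸ mem_zpowers (sr a) : sr a ∈ phi B) sr_not_mem_phi
    · exact congrArg Sum.inr (zpowers_sr_injective h)
  · rintro ⟨H, hH⟩
    rcases classify hH with ⟨A, rfl⟩ | ⟨a, rfl⟩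
    exacts [⟨.inl A, rfl⟩, ⟨.inr a, rfl⟩]

lemma card_cyclic [NeZero m] :
    Nat.card {H : Subgroup (DihedralGroup m) // IsCyclic H} = m.divisors.card + m := by
  rw [← Nat.card_congr (Equiv.ofBijective _ (F_bijective (m := m))), Nat.card_sum,
    card_addSubgroup, Nat.card_zmod]

/-! ### Commutation conditions -/

lemma comm_of_normal_left {G : Type*} [Group G] (H K : Subgroup G) (hH : H.Normal) :
    (H : Set G) * (K : Set G) = (K : Set G) * (H : Set G) := by
  haveI := hH
  rw [← Subgroup.normal_mul H K, ← Subgroup.mul_normal K H, sup_comm]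

lemma comm_of_normal_right {G : Type*} [Group G] (H K : Subgroup G) (hK : K.Normal) :
    (H : Set G) * (K : Set G) = (K : Set G) * (H : Set G) := by
  haveI := hK
  rw [← Subgroup.mul_normal H K, ← Subgroup.normal_mul K H, sup_comm]

lemma pair_mul (a b : ZMod m) :
    ({1, sr a} : Set (DihedralGroup m)) * {1, sr b} = {1, sr b, sr a, r (b - a)} := by
  ext x
  simp only [Set.mem_mul, Set.mem_insert_iff, Set.mem_singleton_iff]
  constructor
  · rintro ⟨y, (rfl | rfl), z, (rfl | rfl), rfl⟩ <;> simp
  · rintro (rfl | rfl | rfl | rfl)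
    · exact ⟨1, Or.inl rfl, 1, Or.inl rfl, mul_one 1⟩
    · exact ⟨1, Or.inl rfl, sr b, Or.inr rfl, one_mul _⟩
    · exact ⟨sr a, Or.inr rfl, 1, Or.inl rfl, mul_one _⟩
    · exact ⟨sr a, Or.inr rfl, sr b, Or.inr rfl, sr_mul_sr a b⟩

lemma comm_sr_iff (a b : ZMod m) :
    ((zpowers (sr a) : Subgroup (DihedralGroup m)) : Set (DihedralGroup m)) *
      (zpowers (sr b) : Subgroup (DihedralGroup m)) =
    ((zpowers (sr b) : Subgroup (DihedralGroup m)) : Set (DihedralGroup m)) *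
      (zpowers (sr a) : Subgroup (DihedralGroup m)) ↔ a - b = b - a := by
  rw [coe_zpowers_sr, coe_zpowers_sr, pair_mul a b, pair_mul b a]
  constructor
  · intro h
    have hmem : r (b - a) ∈ ({1, sr a, sr b, r (a - b)} : Set (DihedralGroup m)) := by
      rw [← h]
      right; right; right; rfl
    rcases hmem with h1 | h1 | h1 | h1
    · rw [one_def] at h1
      injection h1 with h1
      rw [sub_eq_zero] at h1
      rw [h1]
    · exact absurd h1 (by simp)
    · exact absurd h1 (by simp)
    · injection h1 with h1
      rw [h1]
  · intro h
    rw [← h, Set.insert_comm (sr b) (sr a)]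

/-- The combinatorial commutation predicate. -/
def Q : (AddSubgroup (ZMod m) ⊕ ZMod m) → (AddSubgroup (ZMod m) ⊕ ZMod m) → Prop
  | .inr a, .inr b => a - b = b - a
  | _, _ => True

lemma comm_iff [NeZero m] (s t : AddSubgroup (ZMod m) ⊕ ZMod m) :
    (((F s).1 : Set (DihedralGroup m)) * ((F t).1 : Set (DihedralGroup m)) =
      ((F t).1 : Set (DihedralGroup m)) * ((F s).1 : Set (DihedralGroup m))) ↔ Q s t := by
  rcases s with A | a <;> rcases t with B | b
  · exact iff_of_true (comm_of_normal_left _ _ (normal_phi A)) trivial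
  · exact iff_of_true (comm_of_normal_left _ _ (normal_phi A)) trivial
  · exact iff_of_true (comm_of_normal_right _ _ (normal_phi B)) trivial
  · exact comm_sr_iff a b

/-! ### Two-torsion count -/

lemma mem_two_torsion_iff [NeZero m] (t : ZMod m) : t + t = 0 ↔ m ∣ 2 * t.val := by
  have h1 : ((2 * t.val : ℕ) : ZMod m) = t + t := by
    push_cast
    rw [natCast_val_eq]
    ring
  rw [← ZMod.natCast_eq_zero_iff (2 * t.val) m, h1]

lemma two_torsion_odd [NeZero m] (hodd : Odd m) :
    Nat.card {t : ZMod m // t + t = 0} = 1 := by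
  have : ∀ t : ZMod m, t + t = 0 ↔ t ∈ ({0} : Set (ZMod m)) := by
    intro t
    rw [Set.mem_singleton_iff]
    constructor
    · intro h
      have hdvd := (mem_two_torsion_iff t).mp h
      rw [mul_comm] at hdvd
      have hcop : m.Coprime 2 := Nat.coprime_two_right.mpr hodd
      have : m ∣ t.val := hcop.dvd_of_dvd_mul_right hdvd
      have := Nat.eq_zero_of_dvd_of_lt this (ZMod.val_lt t)
      exact (ZMod.val_eq_zero t).mp this
    · rintro rfl; exact add_zero 0
  rw [Nat.card_congr (Equiv.subtypeEquiv (Equiv.refl _) this),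
    Nat.card_coe_set_eq, Set.ncard_singleton]

lemma two_torsion_even (hm : 2 ≤ m) [NeZero m] (heven : Even m) :
    Nat.card {t : ZMod m // t + t = 0} = 2 := by
  obtain ⟨k, hk⟩ := heven
  have hk' : m = 2 * k := by omega
  have hk1 : 1 ≤ k := by omega
  have hkm : k < m := by omega
  have hkne : ((k : ℕ) : ZMod m) ≠ 0 := by
    intro h
    have := congrArg ZMod.val h
    rw [ZMod.val_cast_of_lt hkm, ZMod.val_zero] at this
    omega
  have hiff : ∀ t : ZMod m, t + t = 0 ↔ t ∈ ({0, ((k : ℕ) : ZMod m)} : Set (ZMod m)) := by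
    intro t
    rw [Set.mem_insert_iff, Set.mem_singleton_iff]
    constructor
    · intro h
      have hdvd := (mem_two_torsion_iff t).mp h
      have hdvd2 : 2 * k ∣ 2 * t.val := by rw [← hk']; exact hdvd
      rw [Nat.mul_dvd_mul_iff_left (by norm_num : 0 < 2)] at hdvd2
      obtain ⟨c, hc⟩ := hdvd2
      have hvlt : t.val < 2 * k := hk' ▸ ZMod.val_lt t
      have hc2 : c < 2 := by
        by_contra hc2
        push_neg at hc2
        have : 2 * k ≤ k * c := by calc
          2 * k = k * 2 := by ring
          _ ≤ k * c := Nat.mul_le_mul_left k hc2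
        omega
      interval_cases c
      · left
        have : t.val = 0 := by omega
        exact (ZMod.val_eq_zero t).mp this
      · right
        have hv : t.val = k := by omega
        rw [← hv]
        exact (natCast_val_eq t).symm
    · rintro (rfl | rfl)
      · exact add_zero 0
      · rw [← Nat.cast_add]
        have : ((k + k : ℕ) : ZMod m) = ((m : ℕ) : ZMod m) := by rw [← hk]
        rw [this, ZMod.natCast_self]
  rw [Nat.card_congr (Equiv.subtypeEquiv (Equiv.refl _) hiff),
    Nat.card_coe_set_eq,
    Set.ncard_insert_of_notMem (by simpa using hkne.symm) (Set.finite_singleton _),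
    Set.ncard_singleton]

/-! ### Counting the commuting pairs -/

/-- the partition of commuting pairs. -/
def J [NeZero m] :
    (AddSubgroup (ZMod m) × (AddSubgroup (ZMod m) ⊕ ZMod m)) ⊕
      ((ZMod m × AddSubgroup (ZMod m)) ⊕ (ZMod m × {x : ZMod m // x + x = 0})) →
    {p : (AddSubgroup (ZMod m) ⊕ ZMod m) × (AddSubgroup (ZMod m) ⊕ ZMod m) // Q p.1 p.2}
  | .inl (A, t) => ⟨(.inl A, t), by rcases t with B | b <;> trivial⟩
  | .inr (.inl (a, B)) => ⟨(.inr a, .inl B), trivial⟩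
  | .inr (.inr (a, ⟨x, hx⟩)) => ⟨(.inr a, .inr (a - x)), by
      show a - (a - x) = (a - x) - a
      have h1 : a - (a - x) = x := by ring
      have h2 : (a - x) - a = -x := by ring
      rw [h1, h2]
      linear_combination hx⟩

lemma J_bijective [NeZero m] : Function.Bijective (J (m := m)) := by
  constructor
  · rintro (⟨A, t⟩ | (⟨a, B⟩ | ⟨a, ⟨x, hx⟩⟩)) (⟨A', t'⟩ | (⟨a', B'⟩ | ⟨a', ⟨x', hx'⟩⟩)) h <;>
      simp only [J, Subtype.mk.injEq, Prod.mk.injEq] at h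
    · obtain ⟨h1, h2⟩ := h
      injection h1 with h1
      rw [h1, h2]
    · exact absurd (Prod.mk.inj (Subtype.ext_iff.mp h)).1 (by simp)
    · exact absurd h.1 (by simp)
    · exact absurd (Prod.mk.inj (Subtype.ext_iff.mp h)).1 (by simp)
    · obtain ⟨h1, h2⟩ := Prod.mk.inj (Subtype.ext_iff.mp h)
      injection h1 with h1
      injection h2 with h2
      rw [h1, h2]
    · exact absurd (Prod.mk.inj (Subtype.ext_iff.mp h)).2 (by simp)
    · exact absurd h.1 (by simp)
    · exact absurd (Prod.mk.inj (Subtype.ext_iff.mp h)).2 (by simp)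
    · obtain ⟨h1, h2⟩ := h
      injection h1 with h1
      injection h2 with h2
      subst h1
      have : x = x' := by linear_combination -h2
      subst this
      rfl
  · rintro ⟨⟨s, t⟩, hq⟩
    rcases s with A | a
    · exact ⟨.inl (A, t), rfl⟩
    · rcases t with B | b
      · exact ⟨.inr (.inl (a, B)), rfl⟩
      · have hx : (a - b) + (a - b) = 0 := by
          have : a - b = b - a := hq
          linear_combination this
        refine ⟨.inr (.inr (a, ⟨a - b, hx⟩)), ?_⟩
        refine Subtype.ext ?_
        show (Sum.inr a, Sum.inr (a - (a - b))) = (Sum.inr a, Sum.inr b)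
        simp only [Prod.mk.injEq]
        exact ⟨trivial, by congr 1; ring⟩

lemma card_pairs [NeZero m] :
    Nat.card {pr : Subgroup (DihedralGroup m) × Subgroup (DihedralGroup m) //
      IsCyclic ↥pr.1 ∧ IsCyclic ↥pr.2 ∧
      (pr.1 : Set (DihedralGroup m)) * (pr.2 : Set (DihedralGroup m)) =
        (pr.2 : Set (DihedralGroup m)) * (pr.1 : Set (DihedralGroup m))} =
    m.divisors.card * (m.divisors.card + m) + m * m.divisors.card +
      m * Nat.card {x : ZMod m // x + x = 0} := by
  have hG2 : Function.Bijective
      (fun p : {p : (AddSubgroup (ZMod m) ⊕ ZMod m) × (AddSubgroup (ZMod m) ⊕ ZMod m) //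
          Q p.1 p.2} =>
        (⟨((F p.1.1 : {H : Subgroup (DihedralGroup m) // IsCyclic H}).1, (F p.1.2).1),
          (F p.1.1).2, (F p.1.2).2, (comm_iff p.1.1 p.1.2).mpr p.2⟩ :
          {pr : Subgroup (DihedralGroup m) × Subgroup (DihedralGroup m) //
            IsCyclic ↥pr.1 ∧ IsCyclic ↥pr.2 ∧
            (pr.1 : Set (DihedralGroup m)) * (pr.2 : Set (DihedralGroup m)) =
              (pr.2 : Set (DihedralGroup m)) * (pr.1 : Set (DihedralGroup m))})) := by
    constructor
    · rintro ⟨⟨s, t⟩, hq⟩ ⟨⟨s', t'⟩, hq'⟩ h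
      simp only [Subtype.mk.injEq, Prod.mk.injEq] at h
      have h1 : F s = F s' := Subtype.ext h.1
      have h2 : F t = F t' := Subtype.ext h.2
      have := F_bijective.1 h1
      have := F_bijective.1 h2
      refine Subtype.ext ?_
      simp only [Prod.mk.injEq]
      exact ⟨F_bijective.1 h1, F_bijective.1 h2⟩
    · rintro ⟨⟨H, K⟩, hH, hK, hc⟩
      obtain ⟨s, hs⟩ := F_bijective.2 ⟨H, hH⟩
      obtain ⟨t, ht⟩ := F_bijective.2 ⟨K, hK⟩
      have hsH : (F s).1 = H := congrArg Subtype.val hs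
      have htK : (F t).1 = K := congrArg Subtype.val ht
      have hq : Q s t := (comm_iff s t).mp (by rw [hsH, htK]; exact hc)
      refine ⟨⟨(s, t), hq⟩, ?_⟩
      refine Subtype.ext ?_
      simp only [Prod.mk.injEq]
      exact ⟨hsH, htK⟩
  rw [← Nat.card_congr (Equiv.ofBijective _ hG2),
    ← Nat.card_congr (Equiv.ofBijective _ (J_bijective (m := m))),
    Nat.card_sum, Nat.card_sum, Nat.card_prod, Nat.card_prod, Nat.card_prod,
    Nat.card_sum, card_addSubgroup, Nat.card_zmod]
  ring

end CsdDihedral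


theorem stmt_8 (m : ℕ) (hm : 2 ≤ m) :
    (Odd m → csd (DihedralGroup m) =
      ((m.divisors.card : ℚ) * ((m.divisors.card : ℚ) + m) +
        m * ((m.divisors.card : ℚ) + 1)) / ((m.divisors.card : ℚ) + m) ^ 2) ∧
    (Even m → csd (DihedralGroup m) =
      ((m.divisors.card : ℚ) * ((m.divisors.card : ℚ) + m) +
        m * ((m.divisors.card : ℚ) + 2)) / ((m.divisors.card : ℚ) + m) ^ 2) := by
  haveI : NeZero m := ⟨by omega⟩
  have hden := CsdDihedral.card_cyclic (m := m)
  have hnum := CsdDihedral.card_pairs (m := m)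
  constructor
  · intro hodd
    rw [csd, hnum, hden, CsdDihedral.two_torsion_odd hodd]
    push_cast
    ring
  · intro heven
    rw [csd, hnum, hden, CsdDihedral.two_torsion_even hm heven]
    push_cast
    ring
end

section
/- For every integer n ≥ 2, the dihedral group D_{2^n} of order 2^n satisfies csd(D_{2^n}) = (n² + (n+1)·2^n) / (n + 2^{n−1})². In particular, csd(D₈) = 41/49. -/
open Pointwise

namespace CsdAux

open Subgroup DihedralGroup

variable {G : Type*} [Group G] {m n : ℕ}

lemma isCyclic_zpowers (g : G) : IsCyclic (zpowers g) := by
  refine ⟨⟨⟨g, mem_zpowers g⟩, ?_⟩⟩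
  rintro ⟨x, hx⟩
  obtain ⟨k, hk⟩ := mem_zpowers_iff.mp hx
  exact mem_zpowers_iff.mpr ⟨k, by ext; simp [hk]⟩

lemma set_mul_comm {A B : Set G} (h : ∀ a ∈ A, ∀ b ∈ B, a * b = b * a) :
    A * B = B * A := by
  ext x
  simp only [Set.mem_mul]
  constructor
  · rintro ⟨a, ha, b, hb, rfl⟩
    exact ⟨b, hb, a, ha, (h a ha b hb).symm⟩
  · rintro ⟨b, hb, a, ha, rfl⟩
    exact ⟨a, ha, b, hb, (h a ha b hb)⟩

lemma normal_comm {H K : Subgroup G} (hH : H.Normal) :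
    (H : Set G) * (K : Set G) = (K : Set G) * (H : Set G) := by
  haveI := hH
  rw [← Subgroup.normal_mul, ← Subgroup.mul_normal, sup_comm]

variable {m : ℕ}

lemma r_inv (a : ZMod m) : (r a : DihedralGroup m)⁻¹ = r (-a) := by
  apply inv_eq_of_mul_eq_one_right
  rw [r_mul_r, add_neg_cancel, one_def]

lemma r_npow (a : ZMod m) (k : ℕ) : (r a : DihedralGroup m) ^ k = r ((k : ZMod m) * a) := by
  induction k with
  | zero => simp [one_def, -r_zero]
  | succ k ih => rw [pow_succ, ih, r_mul_r]; push_cast; ring_nf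

lemma r_zpow (a : ZMod m) (k : ℤ) : (r a : DihedralGroup m) ^ k = r ((k : ZMod m) * a) := by
  cases k with
  | ofNat k => simpa using r_npow a k
  | negSucc k =>
      rw [zpow_negSucc, r_npow, r_inv]
      congr 1
      push_cast
      ring

lemma mem_zpowers_r_iff {a : ZMod m} {x : DihedralGroup m} :
    x ∈ zpowers (r a) ↔ ∃ k : ℤ, x = r ((k : ZMod m) * a) := by
  rw [mem_zpowers_iff]
  constructor
  · rintro ⟨k, rfl⟩; exact ⟨k, by rw [r_zpow]⟩
  · rintro ⟨k, rfl⟩; exact ⟨k, by rw [r_zpow]⟩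

lemma normal_zpowers_r (a : ZMod m) : (zpowers (r a : DihedralGroup m)).Normal := by
  constructor
  intro x hx g
  obtain ⟨k, rfl⟩ := mem_zpowers_r_iff.mp hx
  cases g with
  | r c =>
      rw [r_inv, r_mul_r, r_mul_r]
      exact mem_zpowers_r_iff.mpr ⟨k, by ring_nf⟩
  | sr c =>
      have : (sr c : DihedralGroup m)⁻¹ = sr c := by
        apply inv_eq_of_mul_eq_one_right; exact sr_mul_self c
      rw [this, sr_mul_r, sr_mul_sr]
      exact mem_zpowers_r_iff.mpr ⟨-k, by push_cast; ring_nf⟩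

lemma coe_zpowers_sr (i : ZMod m) :
    ((zpowers (sr i : DihedralGroup m) : Subgroup _) : Set (DihedralGroup m)) = {1, sr i} := by
  ext x
  simp only [SetLike.mem_coe, mem_zpowers_iff, Set.mem_insert_iff, Set.mem_singleton_iff]
  constructor
  · rintro ⟨k, rfl⟩
    have h2 : (sr i : DihedralGroup m) ^ (2 : ℤ) = 1 := by
      rw [zpow_two, sr_mul_self]
    have : (sr i : DihedralGroup m) ^ k = (sr i) ^ (k % 2) := by
      conv_lhs => rw [← Int.mul_ediv_add_emod k 2]
      rw [zpow_add, zpow_mul, h2, one_zpow, one_mul]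
    rw [this]
    rcases Int.emod_two_eq k with h | h <;> rw [h] <;> simp
  · rintro (rfl | rfl)
    · exact ⟨0, by simp⟩
    · exact ⟨1, by simp⟩


lemma zpowers_r_eq_gcd [NeZero m] (i : ZMod m) :
    zpowers (r i : DihedralGroup m) = zpowers (r ((Nat.gcd i.val m : ℕ) : ZMod m)) := by
  set d : ℕ := Nat.gcd i.val m with hd
  apply le_antisymm
  · rw [zpowers_le]
    have hdvd : d ∣ i.val := Nat.gcd_dvd_left _ _
    obtain ⟨c, hc⟩ := hdvd
    refine mem_zpowers_r_iff.mpr ⟨c, ?_⟩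
    have : ((i.val : ℕ) : ZMod m) = i := ZMod.natCast_rightInverse i
    rw [← this, hc]
    push_cast
    ring
  · rw [zpowers_le]
    have hb : (d : ℤ) = i.val * Nat.gcdA i.val m + m * Nat.gcdB i.val m :=
      Nat.gcd_eq_gcd_ab i.val m
    refine mem_zpowers_r_iff.mpr ⟨Nat.gcdA i.val m, ?_⟩
    have hcast : ((d : ℤ) : ZMod m) = ((Nat.gcdA i.val m : ZMod m)) * i := by
      rw [hb]
      push_cast [ZMod.natCast_self]
      rw [ZMod.natCast_rightInverse i]
      ring
    have : ((d : ℤ) : ZMod m) = ((d : ℕ) : ZMod m) := by push_cast; ring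
    rw [this] at hcast
    rw [hcast]

lemma exists_zpowers_eq (H : Subgroup G) (hH : IsCyclic H) : ∃ g : G, H = zpowers g := by
  obtain ⟨⟨g, hg⟩, hgen⟩ := hH.exists_generator
  refine ⟨g, le_antisymm ?_ (zpowers_le.mpr hg)⟩
  intro x hx
  obtain ⟨k, hk⟩ := mem_zpowers_iff.mp (hgen ⟨x, hx⟩)
  exact mem_zpowers_iff.mpr ⟨k, by simpa using congrArg Subtype.val hk⟩


/-- The generators of the cyclic subgroups of `DihedralGroup (2^(n-1))`. -/
def gen (m n : ℕ) : Fin n ⊕ ZMod m → DihedralGroup m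
  | .inl j => r ((2 ^ (j : ℕ) : ℕ) : ZMod m)
  | .inr i => sr i

lemma orderOf_gen_inl (hn : 2 ≤ n) (j : Fin n) :
    orderOf (gen (2 ^ (n - 1)) n (.inl j)) = 2 ^ (n - 1 - (j : ℕ)) := by
  haveI : NeZero (2 ^ (n - 1)) := ⟨pow_ne_zero _ two_ne_zero⟩
  have hj : (j : ℕ) ≤ n - 1 := by omega
  rw [gen, orderOf_r, ZMod.val_natCast]
  rw [Nat.gcd_rec (2 ^ (n-1)) (2 ^ (j:ℕ) % 2 ^ (n-1)), Nat.mod_mod_of_dvd _ dvd_rfl,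
    ← Nat.gcd_rec]
  rw [Nat.gcd_eq_right (pow_dvd_pow 2 hj)]
  rw [Nat.pow_div hj two_pos]

lemma gen_injective (hn : 2 ≤ n) :
    Function.Injective (fun x => zpowers (gen (2 ^ (n - 1)) n x)) := by
  haveI : NeZero (2 ^ (n - 1)) := ⟨pow_ne_zero _ two_ne_zero⟩
  rintro (j | i) (j' | i') h
  all_goals simp only [] at h
  · have h1 := Nat.card_zpowers (gen (2 ^ (n-1)) n (.inl j))
    have h2 := Nat.card_zpowers (gen (2 ^ (n-1)) n (.inl j'))
    rw [h] at h1
    rw [h1, orderOf_gen_inl hn, orderOf_gen_inl hn] at h2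
    have := Nat.pow_right_injective (le_refl 2) h2
    have hj : (j : ℕ) < n := j.isLt
    have hj' : (j' : ℕ) < n := j'.isLt
    have : (j : ℕ) = (j' : ℕ) := by omega
    simp [Fin.ext_iff, this]
  · exfalso
    have : sr i' ∈ zpowers (gen (2 ^ (n-1)) n (.inl j)) := by
      rw [h]; exact mem_zpowers _
    obtain ⟨k, hk⟩ := mem_zpowers_r_iff.mp this
    cases hk
  · exfalso
    have : sr i ∈ zpowers (gen (2 ^ (n-1)) n (.inl j')) := by
      rw [← h]; exact mem_zpowers _
    obtain ⟨k, hk⟩ := mem_zpowers_r_iff.mp this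
    cases hk
  · have : sr i ∈ ({1, sr i'} : Set (DihedralGroup (2 ^ (n-1)))) := by
      rw [← coe_zpowers_sr]
      simp only [gen] at h
      rw [← h, coe_zpowers_sr]
      simp
    rcases this with h1 | h1
    · exact absurd h1 (by rw [one_def]; exact fun hc => by cases hc)
    · simp only [Set.mem_singleton_iff, sr.injEq] at h1
      simp [h1]

lemma gen_surjective (hn : 2 ≤ n) (H : Subgroup (DihedralGroup (2 ^ (n - 1))))
    (hH : IsCyclic H) : ∃ x, zpowers (gen (2 ^ (n - 1)) n x) = H := by
  haveI : NeZero (2 ^ (n - 1)) := ⟨pow_ne_zero _ two_ne_zero⟩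
  obtain ⟨g, rfl⟩ := exists_zpowers_eq H hH
  cases g with
  | r i =>
      have hgcd : Nat.gcd i.val (2 ^ (n-1)) ∣ 2 ^ (n-1) := Nat.gcd_dvd_right _ _
      obtain ⟨j, hj, hje⟩ := (Nat.dvd_prime_pow Nat.prime_two).mp hgcd
      refine ⟨.inl ⟨j, by omega⟩, ?_⟩
      rw [zpowers_r_eq_gcd i, hje]
      rfl
  | sr i => exact ⟨.inr i, rfl⟩


lemma prod_ss (i j : ZMod m) :
    ({1, sr i} : Set (DihedralGroup m)) * {1, sr j} = {1, sr i, sr j, r (j - i)} := by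
  ext x
  simp only [Set.mem_mul, Set.mem_insert_iff, Set.mem_singleton_iff]
  constructor
  · rintro ⟨a, (rfl | rfl), b, (rfl | rfl), rfl⟩ <;>
      simp [sr_mul_sr]
  · rintro (rfl | rfl | rfl | rfl)
    · exact ⟨1, Or.inl rfl, 1, Or.inl rfl, mul_one 1⟩
    · exact ⟨sr i, Or.inr rfl, 1, Or.inl rfl, mul_one _⟩
    · exact ⟨1, Or.inl rfl, sr j, Or.inr rfl, one_mul _⟩
    · exact ⟨sr i, Or.inr rfl, sr j, Or.inr rfl, sr_mul_sr i j⟩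

lemma ss_comm_iff (i j : ZMod m) :
    (({1, sr i} : Set (DihedralGroup m)) * {1, sr j} = {1, sr j} * {1, sr i}) ↔
      2 * (i - j) = 0 := by
  rw [prod_ss, prod_ss]
  constructor
  · intro h
    have : r (j - i) ∈ ({1, sr j, sr i, r (i - j)} : Set (DihedralGroup m)) := by
      rw [← h]; simp
    rcases this with h1 | h1 | h1 | h1
    · rw [one_def] at h1
      have : j - i = 0 := by injection h1
      linear_combination -2*this
    · exact absurd h1 (fun hc => by cases hc)
    · exact absurd h1 (fun hc => by cases hc)
    · have : j - i = i - j := by injection h1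
      linear_combination -this
  · intro h
    have hji : j - i = i - j := by linear_combination -h
    rw [hji, Set.insert_comm (sr i) (sr j)]

/-- The permutability predicate on indices. -/
def P (m n : ℕ) : (Fin n ⊕ ZMod m) × (Fin n ⊕ ZMod m) → Prop
  | (.inr i, .inr j) => 2 * (i - j) = 0
  | _ => True

instance (m n : ℕ) : DecidablePred (P m n) := fun q => by
  rcases q with ⟨x | i, y | j⟩ <;> unfold P <;> infer_instance

lemma comm_iff (m n : ℕ) (x y : Fin n ⊕ ZMod m) :
    ((zpowers (gen m n x) : Set (DihedralGroup m)) * (zpowers (gen m n y) : Set (DihedralGroup m)) =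
      (zpowers (gen m n y) : Set (DihedralGroup m)) * (zpowers (gen m n x) : Set (DihedralGroup m)))
      ↔ P m n (x, y) := by
  rcases x with j | i
  · simp only [P, iff_true]
    exact normal_comm (normal_zpowers_r _)
  · rcases y with j' | i'
    · simp only [P, iff_true]
      exact (normal_comm (normal_zpowers_r _)).symm
    · show _ ↔ 2 * (i - i') = 0
      rw [gen, gen, coe_zpowers_sr, coe_zpowers_sr, ss_comm_iff]


lemma two_torsion (hn : 2 ≤ n) (x : ZMod (2 ^ (n - 1))) :
    2 * x = 0 ↔ x = 0 ∨ x = ((2 ^ (n - 2) : ℕ) : ZMod (2 ^ (n - 1))) := by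
  haveI : NeZero (2 ^ (n - 1)) := ⟨pow_ne_zero _ two_ne_zero⟩
  constructor
  · intro h
    have hx : ((x.val : ℕ) : ZMod (2 ^ (n - 1))) = x := ZMod.natCast_rightInverse x
    have h2 : ((2 * x.val : ℕ) : ZMod (2 ^ (n - 1))) = 0 := by push_cast [hx]; exact h
    rw [ZMod.natCast_eq_zero_iff] at h2
    have hsplit : 2 ^ (n - 1) = 2 * 2 ^ (n - 2) := by
      rw [← pow_succ']; congr 1; omega
    have h3 : 2 ^ (n - 2) ∣ x.val := by
      have h4 : 2 * 2 ^ (n - 2) ∣ 2 * x.val := by rw [← hsplit]; exact h2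
      exact (Nat.mul_dvd_mul_iff_left (by norm_num : 0 < 2)).mp h4
    obtain ⟨c, hc⟩ := h3
    have hlt : x.val < 2 * 2 ^ (n - 2) := by
      rw [← hsplit]; exact ZMod.val_lt x
    have hc2 : c < 2 := by nlinarith [Nat.pow_pos (n := n-2) (by norm_num : 0 < 2)]
    interval_cases c
    · left; rw [← hx, hc]; simp
    · right; rw [← hx, hc]; simp
  · rintro (rfl | rfl)
    · simp
    · have : ((2 * 2 ^ (n - 2) : ℕ) : ZMod (2 ^ (n - 1))) = 0 := by
        rw [ZMod.natCast_eq_zero_iff]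
        refine dvd_of_eq ?_
        rw [← pow_succ']; congr 1; omega
      push_cast at this ⊢
      linear_combination this
lemma card_two_torsion_filter (hn : 2 ≤ n) (i : ZMod (2 ^ (n - 1))) :
    (Finset.univ.filter fun j : ZMod (2 ^ (n - 1)) => 2 * (i - j) = 0).card = 2 := by
  haveI : NeZero (2 ^ (n - 1)) := ⟨pow_ne_zero _ two_ne_zero⟩
  set c : ZMod (2 ^ (n - 1)) := ((2 ^ (n - 2) : ℕ) : ZMod (2 ^ (n - 1))) with hc
  have hcne : c ≠ 0 := by
    rw [hc, Ne, ZMod.natCast_eq_zero_iff]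
    intro hdvd
    have := Nat.le_of_dvd (Nat.pow_pos (by norm_num)) hdvd
    have := Nat.pow_lt_pow_right (by norm_num : 1 < 2) (by omega : n - 2 < n - 1)
    omega
  have : (Finset.univ.filter fun j : ZMod (2 ^ (n - 1)) => 2 * (i - j) = 0) = {i, i - c} := by
    ext j
    simp only [Finset.mem_filter, Finset.mem_univ, true_and, Finset.mem_insert,
      Finset.mem_singleton]
    rw [two_torsion hn, sub_eq_zero, ← hc]
    constructor
    · rintro (h | h)
      · left; exact h.symm
      · right; linear_combination -h
    · rintro (rfl | rfl)
      · left; rfl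
      · right; ring
  rw [this, Finset.card_insert_of_notMem, Finset.card_singleton]
  simp only [Finset.mem_singleton]
  intro h
  exact hcne (by linear_combination h)

lemma card_P (hn : 2 ≤ n) :
    Nat.card {q : (Fin n ⊕ ZMod (2 ^ (n - 1))) × (Fin n ⊕ ZMod (2 ^ (n - 1))) //
        P (2 ^ (n - 1)) n q} = n * n + n * 2 ^ (n - 1) + 2 ^ (n - 1) * n + 2 ^ (n - 1) * 2 := by
  haveI : NeZero (2 ^ (n - 1)) := ⟨pow_ne_zero _ two_ne_zero⟩
  rw [Nat.card_eq_fintype_card, Fintype.card_subtype, Finset.card_filter,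
    Fintype.sum_prod_type, Fintype.sum_sum_type]
  have hinl : ∀ a : Fin n,
      (∑ y : Fin n ⊕ ZMod (2 ^ (n - 1)), if P (2 ^ (n - 1)) n (.inl a, y) then 1 else 0)
        = n + 2 ^ (n - 1) := by
    intro a
    have ht : ∀ y, P (2 ^ (n - 1)) n (.inl a, y) := by rintro (b | j) <;> trivial
    simp only [ht, if_true, Finset.sum_const, Finset.card_univ, smul_eq_mul, mul_one]
    rw [Fintype.card_sum, Fintype.card_fin, ZMod.card]
  have hinr : ∀ i : ZMod (2 ^ (n - 1)),
      (∑ y : Fin n ⊕ ZMod (2 ^ (n - 1)), if P (2 ^ (n - 1)) n (.inr i, y) then 1 else 0)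
        = n + 2 := by
    intro i
    rw [Fintype.sum_sum_type]
    have ht : ∀ b : Fin n, P (2 ^ (n - 1)) n (.inr i, .inl b) := fun b => trivial
    have hP : ∀ j : ZMod (2 ^ (n - 1)),
        P (2 ^ (n - 1)) n (.inr i, .inr j) = (2 * (i - j) = 0) := fun j => rfl
    simp only [ht, if_true, Finset.sum_const, Finset.card_univ, smul_eq_mul, mul_one,
      Fintype.card_fin, hP]
    rw [← Finset.card_filter, card_two_torsion_filter hn]
  rw [Finset.sum_congr rfl (fun a _ => hinl a), Finset.sum_congr rfl (fun i _ => hinr i)]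
  simp only [Finset.sum_const, Finset.card_univ, smul_eq_mul, Fintype.card_fin, ZMod.card]
  ring


lemma card_cyclic (hn : 2 ≤ n) :
    Nat.card {H : Subgroup (DihedralGroup (2 ^ (n - 1))) // IsCyclic ↥H} = n + 2 ^ (n - 1) := by
  haveI : NeZero (2 ^ (n - 1)) := ⟨pow_ne_zero _ two_ne_zero⟩
  have hb : Function.Bijective
      (fun x : Fin n ⊕ ZMod (2 ^ (n - 1)) =>
        (⟨zpowers (gen (2 ^ (n - 1)) n x), isCyclic_zpowers _⟩ :
          {H : Subgroup (DihedralGroup (2 ^ (n - 1))) // IsCyclic ↥H})) := by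
    constructor
    · intro x y h
      exact gen_injective hn (congrArg Subtype.val h)
    · rintro ⟨H, hH⟩
      obtain ⟨x, hx⟩ := gen_surjective hn H hH
      exact ⟨x, Subtype.ext hx⟩
  rw [← Nat.card_eq_of_bijective _ hb, Nat.card_sum, Nat.card_eq_fintype_card,
    Nat.card_eq_fintype_card, Fintype.card_fin, ZMod.card]

lemma card_num (hn : 2 ≤ n) :
    Nat.card {pr : Subgroup (DihedralGroup (2 ^ (n - 1))) × Subgroup (DihedralGroup (2 ^ (n - 1))) //
      IsCyclic ↥pr.1 ∧ IsCyclic ↥pr.2 ∧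
      (pr.1 : Set (DihedralGroup (2 ^ (n - 1)))) * (pr.2 : Set (DihedralGroup (2 ^ (n - 1)))) =
        (pr.2 : Set (DihedralGroup (2 ^ (n - 1)))) * (pr.1 : Set (DihedralGroup (2 ^ (n - 1))))} =
      n * n + n * 2 ^ (n - 1) + 2 ^ (n - 1) * n + 2 ^ (n - 1) * 2 := by
  haveI : NeZero (2 ^ (n - 1)) := ⟨pow_ne_zero _ two_ne_zero⟩
  rw [← card_P hn]
  refine (Nat.card_eq_of_bijective
    (fun q : {q : (Fin n ⊕ ZMod (2 ^ (n - 1))) × (Fin n ⊕ ZMod (2 ^ (n - 1))) //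
        P (2 ^ (n - 1)) n q} =>
      (⟨(zpowers (gen (2 ^ (n - 1)) n q.1.1), zpowers (gen (2 ^ (n - 1)) n q.1.2)),
      isCyclic_zpowers _, isCyclic_zpowers _, (comm_iff _ n q.1.1 q.1.2).mpr q.2⟩ :
      {pr : Subgroup (DihedralGroup (2 ^ (n - 1))) × Subgroup (DihedralGroup (2 ^ (n - 1))) //
      IsCyclic ↥pr.1 ∧ IsCyclic ↥pr.2 ∧
      (pr.1 : Set (DihedralGroup (2 ^ (n - 1)))) * (pr.2 : Set (DihedralGroup (2 ^ (n - 1)))) =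
        (pr.2 : Set (DihedralGroup (2 ^ (n - 1)))) * (pr.1 : Set (DihedralGroup (2 ^ (n - 1))))}))
    ?_).symm
  constructor
  · rintro ⟨⟨x, y⟩, hq⟩ ⟨⟨x', y'⟩, hq'⟩ h
    simp only [Subtype.mk.injEq, Prod.mk.injEq] at h
    have hx := gen_injective hn h.1
    have hy := gen_injective hn h.2
    simp only [hx, hy]
  · rintro ⟨⟨H, K⟩, hH, hK, hcomm⟩
    obtain ⟨x, hx⟩ := gen_surjective hn H hH
    obtain ⟨y, hy⟩ := gen_surjective hn K hK
    refine ⟨⟨(x, y), ?_⟩, ?_⟩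
    · exact (comm_iff _ n x y).mp (by rw [hx, hy]; exact hcomm)
    · exact Subtype.ext (Prod.ext hx hy)

lemma csd_dihedral (hn : 2 ≤ n) :
    csd (DihedralGroup (2 ^ (n - 1))) =
      ((n : ℚ) ^ 2 + ((n : ℚ) + 1) * 2 ^ n) / ((n : ℚ) + 2 ^ (n - 1)) ^ 2 := by
  rw [csd, card_num hn, card_cyclic hn]
  have h2 : ((2 : ℚ)) ^ n = 2 * 2 ^ (n - 1) := by
    rw [← pow_succ']; congr 1; omega
  rw [h2]
  push_cast
  congr 1
  ring


end CsdAux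

theorem stmt_9 (n : ℕ) (hn : 2 ≤ n) :
    csd (DihedralGroup (2 ^ (n - 1))) =
      ((n : ℚ) ^ 2 + ((n : ℚ) + 1) * 2 ^ n) / ((n : ℚ) + 2 ^ (n - 1)) ^ 2 ∧
    csd (DihedralGroup 4) = 41 / 49 := by
  refine ⟨CsdAux.csd_dihedral hn, ?_⟩
  have h := CsdAux.csd_dihedral (n := 3) (by norm_num)
  norm_num at h
  convert h using 2 <;> norm_num
end

section
/- The sequence csd(Q_{2^n}), where Q_{2^n} is the generalized quaternion group of order 2^n (n ≥ 3), converges to 0 as n → ∞. -/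
open Pointwise

namespace CsdAux

open QuaternionGroup Subgroup

lemma isCyclic_zpowers_s12 {G : Type*} [Group G] (g : G) : IsCyclic ↥(Subgroup.zpowers g) := by
  refine ⟨⟨⟨g, Subgroup.mem_zpowers g⟩, fun x => ?_⟩⟩
  obtain ⟨s, hs⟩ := Subgroup.mem_zpowers_iff.mp x.2
  exact Subgroup.mem_zpowers_iff.mpr ⟨s, Subtype.ext (by simpa using hs)⟩

variable {n : ℕ}

lemma nn_add : ((n : ZMod (2*n)) + n = 0) := by
  have : ((n + n : ℕ) : ZMod (2*n)) = 0 := by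
    rw [← two_mul]; exact ZMod.natCast_self _
  simpa using this

lemma neg_n : -(n : ZMod (2*n)) = (n : ZMod (2*n)) := by
  rw [neg_eq_iff_add_eq_zero]; exact nn_add

lemma two_n : (2 : ZMod (2*n)) * (n : ZMod (2*n)) = 0 := by
  linear_combination (nn_add (n := n))

lemma a_zpow (k : ℤ) : (a 1 : QuaternionGroup n) ^ k = a (k : ZMod (2*n)) := by
  induction k using Int.induction_on with
  | zero => simp [one_def, -a_zero]
  | succ m ih => rw [zpow_add_one, ih, a_mul_a]; norm_cast
  | pred m ih =>
      rw [zpow_sub_one, ih, mul_inv_eq_iff_eq_mul, a_mul_a]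
      norm_cast
      push_cast
      ring

lemma a_mem_A (j : ZMod (2*n)) [NeZero n] : a j ∈ zpowers (a 1 : QuaternionGroup n) := by
  refine Subgroup.mem_zpowers_iff.mpr ⟨(j.val : ℤ), ?_⟩
  rw [a_zpow]
  norm_cast
  rw [ZMod.natCast_zmod_val]

lemma xa_not_mem_A (j : ZMod (2*n)) : xa j ∉ zpowers (a 1 : QuaternionGroup n) := by
  intro h
  obtain ⟨k, hk⟩ := Subgroup.mem_zpowers_iff.mp h
  rw [a_zpow] at hk
  exact nomatch hk

lemma xa_pow_three (i : ZMod (2*n)) :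
    (xa i : QuaternionGroup n) ^ 3 = xa (i + (n : ZMod (2*n))) := by
  have h3 : (3 : ℕ) = 2 + 1 := rfl
  rw [h3, pow_succ, xa_sq, a_mul_xa, sub_eq_add_neg, neg_n]

lemma mem_zpowers_xa [NeZero n] {i : ZMod (2*n)} {g : QuaternionGroup n}
    (hg : g ∈ zpowers (xa i)) :
    g = a 0 ∨ g = a (n : ZMod (2*n)) ∨ g = xa i ∨ g = xa (i + (n : ZMod (2*n))) := by
  obtain ⟨s, hs⟩ := Subgroup.mem_zpowers_iff.mp hg
  rw [← zpow_mod_orderOf, orderOf_xa] at hs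
  have h0 : 0 ≤ s % (4:ℕ) := Int.emod_nonneg s (by norm_num)
  have h4 : s % (4:ℕ) < 4 := Int.emod_lt_of_pos s (by norm_num)
  interval_cases h : s % (4:ℕ)
  · left; rw [← hs]; simp [one_def, -a_zero]
  · right; right; left; rw [← hs]; simp
  · right; left; rw [← hs]
    rw [show (2:ℤ) = ((2:ℕ):ℤ) from rfl, zpow_natCast, xa_sq]
  · right; right; right; rw [← hs]
    rw [show (3:ℤ) = ((3:ℕ):ℤ) from rfl, zpow_natCast, xa_pow_three]


lemma eq_zpowers_of_isCyclic {G : Type*} [Group G] (H : Subgroup G) (hc : IsCyclic ↥H) :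
    ∃ g : G, g ∈ H ∧ H = Subgroup.zpowers g := by
  obtain ⟨g, hg⟩ := hc.exists_generator
  refine ⟨(g : G), g.2, ?_⟩
  ext x
  constructor
  · intro hx
    obtain ⟨s, hs⟩ := Subgroup.mem_zpowers_iff.mp (hg ⟨x, hx⟩)
    exact Subgroup.mem_zpowers_iff.mpr ⟨s, by have := congrArg (Subtype.val) hs; simpa using this⟩
  · intro hx
    obtain ⟨s, hs⟩ := Subgroup.mem_zpowers_iff.mp hx
    rw [← hs]
    exact Subgroup.zpow_mem H g.2 s

lemma cyclic_subgroup_classify [NeZero n] (H : Subgroup (QuaternionGroup n))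
    (hc : IsCyclic ↥H) (hH : ¬ H ≤ zpowers (a 1 : QuaternionGroup n)) :
    ∃ i, H = zpowers (xa i) := by
  obtain ⟨g, hgH, hg⟩ := eq_zpowers_of_isCyclic H hc
  cases g with
  | a t =>
      exact absurd (hg ▸ (Subgroup.zpowers_le.mpr (a_mem_A t))) hH
  | xa t => exact ⟨t, hg⟩

/-- main computation: permuting pair of "outside" cyclic subgroups forces a congruence. -/
lemma perm_cond [NeZero n] (i j : ZMod (2*n))
    (h : (zpowers (xa i : QuaternionGroup n) : Set (QuaternionGroup n)) * (zpowers (xa j) : Set (QuaternionGroup n))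
       = (zpowers (xa j) : Set (QuaternionGroup n)) * (zpowers (xa i) : Set (QuaternionGroup n))) :
    2*(i - j) = 0 ∨ 2*(i - j) = (n : ZMod (2*n)) := by
  have hz : (xa j : QuaternionGroup n) * xa i ∈
      (zpowers (xa j : QuaternionGroup n) : Set (QuaternionGroup n)) * (zpowers (xa i) : Set (QuaternionGroup n)) :=
    Set.mul_mem_mul (Subgroup.mem_zpowers _) (Subgroup.mem_zpowers _)
  rw [← h] at hz
  obtain ⟨p, hp, q, hq, hpq⟩ := hz
  have h2n : (2 : ZMod (2*n)) * (n : ZMod (2*n)) = 0 := two_n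
  rw [xa_mul_xa] at hpq
  rcases mem_zpowers_xa hp with rfl | rfl | rfl | rfl <;>
    rcases mem_zpowers_xa hq with rfl | rfl | rfl | rfl <;>
    simp only [a_mul_a, a_mul_xa, xa_mul_a, xa_mul_xa, a.injEq, reduceCtorEq] at hpq
  · left; linear_combination (-2 : ZMod (2*n))*hpq - h2n
  · left; linear_combination (-2 : ZMod (2*n))*hpq
  · left; linear_combination (-2 : ZMod (2*n))*hpq
  · left; linear_combination (-2 : ZMod (2*n))*hpq + h2n
  · left; linear_combination (-1 : ZMod (2*n))*hpq
  · right; linear_combination (-1 : ZMod (2*n))*hpq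
  · right; linear_combination (-1 : ZMod (2*n))*hpq - h2n
  · left; linear_combination (-1 : ZMod (2*n))*hpq


lemma subgroup_card_unique {α : Type*} [Group α] [Finite α] [IsCyclic α]
    (K₁ K₂ : Subgroup α) (h : Nat.card ↥K₁ = Nat.card ↥K₂) : K₁ = K₂ := by
  classical
  letI := Fintype.ofFinite α
  letI : CommGroup α := IsCyclic.commGroup
  set d := Nat.card ↥K₁ with hd
  have hd0 : 0 < d := Nat.card_pos
  set T : Subgroup α := MonoidHom.ker (powMonoidHom d : α →* α) with hT
  have hsub : ∀ K : Subgroup α, Nat.card ↥K = d → K ≤ T := by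
    intro K hK x hx
    have : (⟨x, hx⟩ : ↥K) ^ d = 1 := by
      rw [← hK]; exact pow_card_eq_one'
    have hx1 : x ^ d = 1 := by
      have := congrArg (Subtype.val) this
      simpa using this
    simpa [hT, MonoidHom.mem_ker, powMonoidHom_apply] using hx1
  have hcardT : Nat.card ↥T ≤ d := by
    have hle := IsCyclic.card_pow_eq_one_le (α := α) (n := d) hd0
    have : Nat.card ↥T = (Finset.univ.filter (fun a : α => a ^ d = 1)).card := by
      rw [Nat.card_eq_fintype_card, Fintype.card_subtype]
      congr 1
      apply Finset.filter_congr
      intro x _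
      simp [hT, MonoidHom.mem_ker, powMonoidHom_apply]
    rw [this]
    convert hle using 2
  have h1 : K₁ = T := Subgroup.eq_of_le_of_card_ge (hsub K₁ rfl) (le_trans hcardT (le_of_eq hd))
  have h2 : K₂ = T := Subgroup.eq_of_le_of_card_ge (hsub K₂ h.symm)
    (le_trans hcardT (le_of_eq (hd.trans h)))
  rw [h1, h2]

lemma le_zpowers_card_unique {G : Type*} [Group G] [Finite G] (g : G)
    (K₁ K₂ : Subgroup G) (h1 : K₁ ≤ Subgroup.zpowers g) (h2 : K₂ ≤ Subgroup.zpowers g)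
    (h : Nat.card ↥K₁ = Nat.card ↥K₂) : K₁ = K₂ := by
  set A := Subgroup.zpowers g with hA
  haveI : IsCyclic ↥A := isCyclic_zpowers_s12 g
  have e1 := (Subgroup.subgroupOfEquivOfLe h1).toEquiv
  have e2 := (Subgroup.subgroupOfEquivOfLe h2).toEquiv
  have hc : Nat.card ↥(K₁.subgroupOf A) = Nat.card ↥(K₂.subgroupOf A) := by
    rw [Nat.card_congr e1, Nat.card_congr e2, h]
  have := subgroup_card_unique (K₁.subgroupOf A) (K₂.subgroupOf A) hc
  have hm1 := Subgroup.subgroupOf_map_subtype K₁ A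
  have hm2 := Subgroup.subgroupOf_map_subtype K₂ A
  rw [inf_eq_left.mpr h1] at hm1
  rw [inf_eq_left.mpr h2] at hm2
  rw [← hm1, ← hm2, this]


lemma card_subgroups_le {G : Type*} [Group G] [Finite G] (g : G) (k : ℕ)
    (hord : orderOf g = 2^(k+1)) :
    Nat.card {K : Subgroup G // K ≤ Subgroup.zpowers g ∧ IsCyclic ↥K} ≤ k + 2 := by
  classical
  have key : ∀ K : Subgroup G, K ≤ Subgroup.zpowers g →
      Nat.card ↥K = 2 ^ ((Nat.card ↥K).factorization 2) ∧
      (Nat.card ↥K).factorization 2 ≤ k + 1 := by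
    intro K hK
    have hdvd : Nat.card ↥K ∣ 2^(k+1) := by
      have := Subgroup.card_dvd_of_le hK
      rwa [Nat.card_zpowers, hord] at this
    obtain ⟨e, he, hce⟩ := (Nat.dvd_prime_pow Nat.prime_two).mp hdvd
    have hfac : (Nat.card ↥K).factorization 2 = e := by
      rw [hce, Nat.Prime.factorization_pow Nat.prime_two, Finsupp.single_eq_same]
    rw [hfac, ← hce]
    exact ⟨rfl, he⟩
  have hinj : Function.Injective
      (fun K : {K : Subgroup G // K ≤ Subgroup.zpowers g ∧ IsCyclic ↥K} =>
        (⟨(Nat.card ↥K.1).factorization 2,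
          Nat.lt_succ_of_le (key K.1 K.2.1).2⟩ : Fin (k+2))) := by
    intro K₁ K₂ h
    simp only [Fin.mk.injEq] at h
    have hc : Nat.card ↥K₁.1 = Nat.card ↥K₂.1 := by
      rw [(key K₁.1 K₁.2.1).1, (key K₂.1 K₂.2.1).1, h]
    exact Subtype.ext (le_zpowers_card_unique g K₁.1 K₂.1 K₁.2.1 K₂.2.1 hc)
  have := Nat.card_le_card_of_injective _ hinj
  simpa using this

lemma two_mul_eq_zero [NeZero n] (d : ZMod (2*n)) (h : 2*d = 0) :
    d = 0 ∨ d = (n : ZMod (2*n)) := by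
  have h2 : ((2 * d.val : ℕ) : ZMod (2*n)) = 0 := by
    push_cast
    rw [ZMod.natCast_zmod_val]
    exact h
  have hdvd : 2 * n ∣ 2 * d.val := (ZMod.natCast_eq_zero_iff _ _).mp h2
  have hn : n ∣ d.val := (mul_dvd_mul_iff_left (two_ne_zero)).mp hdvd
  obtain ⟨c, hc⟩ := hn
  have hlt : d.val < 2 * n := ZMod.val_lt d
  have hc2 : c < 2 := by
    by_contra hcc
    push_neg at hcc
    have : 2 * n ≤ n * c := by
      calc 2 * n = n * 2 := by ring
        _ ≤ n * c := Nat.mul_le_mul_left n hcc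
    omega
  interval_cases c
  · left
    have : d.val = 0 := by omega
    rw [← ZMod.natCast_zmod_val d, this, Nat.cast_zero]
  · right
    have : d.val = n := by omega
    rw [← ZMod.natCast_zmod_val d, this]

lemma card_D_le (e : ℕ) (hn : n = 2 * e) [NeZero n] :
    Nat.card {d : ZMod (2*n) // 2*d = 0 ∨ 2*d = (n : ZMod (2*n))} ≤ 4 := by
  have h2e : (2 : ZMod (2*n)) * (e : ZMod (2*n)) = (n : ZMod (2*n)) := by
    rw [hn]; push_cast; ring
  have hsub : {d : ZMod (2*n) | 2*d = 0 ∨ 2*d = (n : ZMod (2*n))} ⊆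
      {0, (n : ZMod (2*n)), (e : ZMod (2*n)), (e : ZMod (2*n)) + (n : ZMod (2*n))} := by
    rintro d (hd | hd)
    · rcases two_mul_eq_zero d hd with rfl | rfl
      · exact Set.mem_insert _ _
      · exact Set.mem_insert_of_mem _ (Set.mem_insert _ _)
    · have : 2 * (d - (e : ZMod (2*n))) = 0 := by
        rw [mul_sub, hd, h2e, sub_self]
      rcases two_mul_eq_zero _ this with h0 | h0
      · have : d = (e : ZMod (2*n)) := by linear_combination h0
        rw [this]
        exact Set.mem_insert_of_mem _ (Set.mem_insert_of_mem _ (Set.mem_insert _ _))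
      · have : d = (e : ZMod (2*n)) + (n : ZMod (2*n)) := by linear_combination h0
        rw [this]
        exact Set.mem_insert_of_mem _ (Set.mem_insert_of_mem _
          (Set.mem_insert_of_mem _ rfl))
  calc Nat.card {d : ZMod (2*n) // 2*d = 0 ∨ 2*d = (n : ZMod (2*n))}
      = {d : ZMod (2*n) | 2*d = 0 ∨ 2*d = (n : ZMod (2*n))}.ncard := rfl
    _ ≤ ({0, (n : ZMod (2*n)), (e : ZMod (2*n)), (e : ZMod (2*n)) + (n : ZMod (2*n))} :
          Set (ZMod (2*n))).ncard := Set.ncard_le_ncard hsub (Set.toFinite _)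
    _ ≤ 4 := by
        refine le_trans (Set.ncard_insert_le _ _) ?_
        have h1 := Set.ncard_insert_le ((n : ZMod (2*n)))
          ({(e : ZMod (2*n)), (e : ZMod (2*n)) + (n : ZMod (2*n))} : Set (ZMod (2*n)))
        have h2 := Set.ncard_insert_le ((e : ZMod (2*n)))
          ({(e : ZMod (2*n)) + (n : ZMod (2*n))} : Set (ZMod (2*n)))
        have h3 := Set.ncard_singleton ((e : ZMod (2*n)) + (n : ZMod (2*n)))
        omega

lemma card_S_ge [NeZero n] :
    n ≤ Nat.card {H : Subgroup (QuaternionGroup n) // IsCyclic ↥H} := by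
  have hinj : Function.Injective
      (fun i : Fin n =>
        (⟨Subgroup.zpowers (xa ((i : ℕ) : ZMod (2*n))), isCyclic_zpowers_s12 _⟩ :
          {H : Subgroup (QuaternionGroup n) // IsCyclic ↥H})) := by
    intro i j hij
    simp only [Subtype.mk.injEq] at hij
    have hmem : (xa ((i : ℕ) : ZMod (2*n)) : QuaternionGroup n) ∈
        Subgroup.zpowers (xa ((j : ℕ) : ZMod (2*n))) := by
      rw [← hij]; exact Subgroup.mem_zpowers _
    have hvi : (((i : ℕ) : ZMod (2*n))).val = (i : ℕ) := by
      rw [ZMod.val_natCast]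
      exact Nat.mod_eq_of_lt (by omega)
    have hvj : (((j : ℕ) : ZMod (2*n))).val = (j : ℕ) := by
      rw [ZMod.val_natCast]
      exact Nat.mod_eq_of_lt (by omega)
    have hvn : ((n : ℕ) : ZMod (2*n)).val = n := by
      rw [ZMod.val_natCast]
      exact Nat.mod_eq_of_lt (by omega)
    rcases mem_zpowers_xa hmem with h | h | h | h
    · exact nomatch h
    · exact nomatch h
    · have := congrArg ZMod.val (xa.inj h)
      rw [hvi, hvj] at this
      exact Fin.ext this
    · exfalso
      have := congrArg ZMod.val (xa.inj h)
      rw [hvi, ZMod.val_add, hvj, hvn] at this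
      rw [Nat.mod_eq_of_lt (by omega)] at this
      omega
  have := Nat.card_le_card_of_injective _ hinj
  simpa using this


theorem card_T_le (k : ℕ) (hk : 1 ≤ k) :
    Nat.card {pr : Subgroup (QuaternionGroup (2^k)) × Subgroup (QuaternionGroup (2^k)) //
      IsCyclic ↥pr.1 ∧ IsCyclic ↥pr.2 ∧
      (pr.1 : Set (QuaternionGroup (2^k))) * (pr.2 : Set (QuaternionGroup (2^k)))
        = (pr.2 : Set (QuaternionGroup (2^k))) * (pr.1 : Set (QuaternionGroup (2^k)))} ≤
    Nat.card {H : Subgroup (QuaternionGroup (2^k)) // IsCyclic ↥H} * (2*k+8) := by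
  classical
  haveI : NeZero (2^k) := ⟨(pow_pos (by norm_num : (0:ℕ) < 2) k).ne'⟩
  set n : ℕ := 2^k with hn
  set G := QuaternionGroup n with hG
  set A : Subgroup G := Subgroup.zpowers (a 1) with hA
  set idx : Subgroup G → ZMod (2*n) := fun H =>
    if h : ∃ i, H = Subgroup.zpowers (xa i) then h.choose else 0 with hidx
  have idx_spec : ∀ H : Subgroup G, IsCyclic ↥H → ¬ H ≤ A →
      H = Subgroup.zpowers (xa (idx H)) := by
    intro H hc hH
    have hex : ∃ i, H = Subgroup.zpowers (xa i) := cyclic_subgroup_classify H hc hH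
    simp only [hidx, dif_pos hex]
    exact hex.choose_spec
  set S := {H : Subgroup G // IsCyclic ↥H} with hSdef
  set T := {pr : Subgroup G × Subgroup G //
      IsCyclic ↥pr.1 ∧ IsCyclic ↥pr.2 ∧
      (pr.1 : Set G) * (pr.2 : Set G) = (pr.2 : Set G) * (pr.1 : Set G)} with hTdef
  set CA := {K : Subgroup G // K ≤ A ∧ IsCyclic ↥K} with hCAdef
  set D := {d : ZMod (2*n) // 2*d = 0 ∨ 2*d = (n : ZMod (2*n))} with hDdef
  have hCA : Nat.card CA ≤ k + 2 := by
    refine card_subgroups_le (a 1) k ?_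
    rw [orderOf_a_one, hn, pow_succ]
    ring
  have hD : Nat.card D ≤ 4 := by
    refine card_D_le (2^(k-1)) ?_
    have hk1 : k = (k-1) + 1 := by omega
    rw [hn]
    conv_lhs => rw [hk1]
    rw [pow_succ]
    ring
  have dcond : ∀ t : T, ¬ (t.1.2 ≤ A) → ¬ (t.1.1 ≤ A) →
      2*(idx t.1.1 - idx t.1.2) = 0 ∨ 2*(idx t.1.1 - idx t.1.2) = (n : ZMod (2*n)) := by
    intro t hK hH
    have e1 := idx_spec t.1.1 t.2.1 hH
    have e2 := idx_spec t.1.2 t.2.2.1 hK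
    have hcomm := t.2.2.2
    rw [e1, e2] at hcomm
    exact perm_cond _ _ hcomm
  set F : T → S × (CA ⊕ CA ⊕ D) := fun t =>
    if hKA : t.1.2 ≤ A then (⟨t.1.1, t.2.1⟩, Sum.inl ⟨t.1.2, hKA, t.2.2.1⟩)
    else if hHA : t.1.1 ≤ A then (⟨t.1.2, t.2.2.1⟩, Sum.inr (Sum.inl ⟨t.1.1, hHA, t.2.1⟩))
    else (⟨t.1.1, t.2.1⟩, Sum.inr (Sum.inr ⟨idx t.1.1 - idx t.1.2, dcond t hKA hHA⟩))
    with hF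
  have hFinj : Function.Injective F := by
    intro t₁ t₂ h
    refine Subtype.ext ?_
    simp only [hF] at h
    split_ifs at h <;>
      simp only [Prod.mk.injEq, Sum.inl.injEq, Sum.inr.injEq, Subtype.mk.injEq,
        reduceCtorEq, and_false, false_and, and_true, true_and] at h
    · exact Prod.ext (congrArg Subtype.val h.1) (congrArg Subtype.val h.2)
    · exact Prod.ext (congrArg Subtype.val h.2) (congrArg Subtype.val h.1)
    case _ hK1 hH1 hK2 hH2 =>
      have hHeq : t₁.1.1 = t₂.1.1 := congrArg Subtype.val h.1
      have h2v := congrArg Subtype.val h.2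
      simp only at h2v
      rw [hHeq] at h2v
      have hidxK : idx t₁.1.2 = idx t₂.1.2 := by
        linear_combination -h2v
      have hKeq : t₁.1.2 = t₂.1.2 := by
        rw [idx_spec t₁.1.2 t₁.2.2.1 hK1, idx_spec t₂.1.2 t₂.2.2.1 hK2, hidxK]
      exact Prod.ext hHeq hKeq
  calc Nat.card T ≤ Nat.card (S × (CA ⊕ CA ⊕ D)) :=
        Nat.card_le_card_of_injective F hFinj
    _ = Nat.card S * (Nat.card CA + (Nat.card CA + Nat.card D)) := by
        rw [Nat.card_prod, Nat.card_sum, Nat.card_sum]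
    _ ≤ Nat.card S * (2*k+8) := by
        refine Nat.mul_le_mul_left _ ?_
        omega

theorem csd_bound (k : ℕ) (hk : 1 ≤ k) :
    csd (QuaternionGroup (2^k)) ≤ ((2*k+8 : ℚ)) / 2^k := by
  haveI : NeZero (2^k) := ⟨(pow_pos (by norm_num : (0:ℕ) < 2) k).ne'⟩
  have hT := card_T_le k hk
  have hS : 2^k ≤ Nat.card {H : Subgroup (QuaternionGroup (2^k)) // IsCyclic ↥H} :=
    card_S_ge
  unfold csd
  set tc := Nat.card {pr : Subgroup (QuaternionGroup (2^k)) × Subgroup (QuaternionGroup (2^k)) //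
      IsCyclic ↥pr.1 ∧ IsCyclic ↥pr.2 ∧
      (pr.1 : Set (QuaternionGroup (2^k))) * (pr.2 : Set (QuaternionGroup (2^k)))
        = (pr.2 : Set (QuaternionGroup (2^k))) * (pr.1 : Set (QuaternionGroup (2^k)))} with htc
  set sc := Nat.card {H : Subgroup (QuaternionGroup (2^k)) // IsCyclic ↥H} with hsc
  have h1 : (tc : ℚ) ≤ (sc : ℚ) * (2*k+8) := by exact_mod_cast hT
  have h2 : ((2:ℚ)^k) ≤ (sc : ℚ) := by exact_mod_cast hS
  have hp : (0:ℚ) < 2^k := by positivity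
  have hs0 : (0:ℚ) < (sc:ℚ) := lt_of_lt_of_le hp h2
  rw [div_le_div_iff₀ (by positivity) hp]
  have key : (tc : ℚ) * 2^k ≤ ((sc:ℚ) * (2*k+8)) * 2^k := by
    apply mul_le_mul_of_nonneg_right h1 (le_of_lt hp)
  calc (tc : ℚ) * 2^k ≤ ((sc:ℚ) * (2*k+8)) * 2^k := key
    _ ≤ ((sc:ℚ) * (2*k+8)) * (sc:ℚ) := by
        apply mul_le_mul_of_nonneg_left h2
        positivity
    _ = (2*(k:ℚ)+8) * (sc:ℚ)^2 := by ring


lemma sq_le_two_pow : ∀ k : ℕ, 4 ≤ k → k^2 ≤ 2^k := by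
  intro k hk
  induction k, hk using Nat.le_induction with
  | base => norm_num
  | succ m hm ih =>
      have h1 : 2^m ≥ m^2 := ih
      have h2 : m^2 ≥ 4*m := by nlinarith
      have e : (2:ℕ)^(m+1) = 2^m + 2^m := by ring
      nlinarith [h1, h2, e, hm]

lemma csd_small (m : ℕ) (hm : 6 ≤ m) :
    csd (QuaternionGroup (2^(m-2))) ≤ 8 / (m : ℚ) := by
  set k := m - 2 with hkdef
  have hk4 : 4 ≤ k := by omega
  have hmk : m = k + 2 := by omega
  have h1 : csd (QuaternionGroup (2^k)) ≤ ((2*k+8 : ℚ)) / 2^k := csd_bound k (by omega)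
  refine le_trans h1 ?_
  have hpow : ((k:ℚ))^2 ≤ (2:ℚ)^k := by exact_mod_cast sq_le_two_pow k hk4
  have hk4' : (4:ℚ) ≤ (k:ℚ) := by exact_mod_cast hk4
  have hm' : (m : ℚ) = (k:ℚ) + 2 := by rw [hmk]; push_cast; ring
  have hp2 : (0:ℚ) < 2^k := by positivity
  have hpm : (0:ℚ) < (m:ℚ) := by
    have : (0:ℕ) < m := by omega
    exact_mod_cast this
  rw [div_le_div_iff₀ hp2 hpm, hm']
  nlinarith [hpow, hk4', sq_nonneg ((k:ℚ) - 4)]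

end CsdAux

theorem stmt_12 :
    Filter.Tendsto (fun n : ℕ => (csd (QuaternionGroup (2 ^ (n - 2))) : ℝ))
      Filter.atTop (nhds 0) := by
  apply squeeze_zero' (g := fun m : ℕ => 8 / (m:ℝ))
  · refine Filter.Eventually.of_forall (fun m => ?_)
    have : (0:ℚ) ≤ csd (QuaternionGroup (2 ^ (m - 2))) := by
      unfold csd
      positivity
    exact_mod_cast this
  · rw [Filter.eventually_atTop]
    refine ⟨6, fun m hm => ?_⟩
    have := CsdAux.csd_small m hm
    have hcast : ((csd (QuaternionGroup (2 ^ (m - 2))) : ℚ) : ℝ) ≤ ((8 / (m:ℚ) : ℚ) : ℝ) := by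
      exact_mod_cast this
    simpa using hcast
  · exact tendsto_const_div_atTop_nhds_zero_nat 8
end
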